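/- arXiv:0906.0219 — 6 statements merged into one kernel-verified Lean document; each statement's English description precedes it below -/
import Mathlib

section
/- Let X and Y be realcompact (completely regular Hausdorff) spaces and let E and F be nontrivial Hausdorff topological vector lattices. Suppose T : C(X,E) → C(Y,F) is a vector lattice isomorphism (a linear bijection with T(f ∨ g) = Tf ∨ Tg for all f, g, where C(X,E) and C(Y,F) carry the pointwise lattice order) such that Z(f) ≠ ∅ ⟺ Z(Tf) ≠ ∅ for every f ∈ C(X,E). Then there are a homeomorphism h : Y → X and, for each y ∈ Y, a vector lattice isomorphism S_y : E → F (a linear bijection with S_y(u ∨ v) = S_y(u) ∨ S_y(v)) such that Tf(y) = S_y(f(h(y))) for all f ∈ C(X,E) and all y ∈ Y. -/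
open Set Filter Topology

/-- A map `T` between `C(X,E)` and `C(Y,F)` preserves common zeros if for every `k ∈ ℕ` and
every finite family `f₁, …, f_k` in `C(X,E)`, the zero sets of the `fᵢ` have a common point
iff the zero sets of the `T fᵢ` do. -/
def PreservesCommonZerosC {X Y E F : Type*} [TopologicalSpace X] [TopologicalSpace Y]
    [TopologicalSpace E] [Zero E] [TopologicalSpace F] [Zero F]
    (T : C(X, E) → C(Y, F)) : Prop :=
  ∀ (k : ℕ) (f : Fin (k + 1) → C(X, E)),
    (⋂ i, {x | f i x = 0}).Nonempty ↔ (⋂ i, {y | T (f i) y = 0}).Nonempty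

/-- The unique continuous extension `ψ* : βY → ℝ ∪ {∞}` of `ψ ∈ C(Y)` with values in the
one-point compactification of `ℝ`. -/
noncomputable def onePointExt {Y : Type*} [TopologicalSpace Y] (ψ : C(Y, ℝ)) :
    StoneCech Y → OnePoint ℝ :=
  stoneCechExtend (OnePoint.continuous_coe.comp ψ.continuous)

/-- The Hewitt realcompactification `υY ⊆ βY`: the set of points of `βY` at which the
extension of every real-valued continuous function on `Y` takes a finite value. -/
def hewittRealcompactification (Y : Type*) [TopologicalSpace Y] : Set (StoneCech Y) :=
  {p | ∀ ψ : C(Y, ℝ), onePointExt ψ p ≠ OnePoint.infty}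

/-- A completely regular Hausdorff space is realcompact if the image of the canonical map
`ι_X : X → βX` is exactly the Hewitt realcompactification `υX`. -/
def Realcompact (X : Type*) [TopologicalSpace X] : Prop :=
  Set.range (stoneCechUnit : X → StoneCech X) = hewittRealcompactification X

set_option linter.unnecessarySimpa false
set_option linter.unusedSectionVars false
set_option maxHeartbeats 1000000

section OrderHelpers
variable {E : Type*} [Lattice E] [AddCommGroup E] [Module ℝ E]
    [CovariantClass E E (· + ·) (· ≤ ·)] [PosSMulMono ℝ E]

lemma my_smul_nonneg {c : ℝ} {v : E} (hc : 0 ≤ c) (hv : 0 ≤ v) : 0 ≤ c • v := by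
  have := smul_le_smul_of_nonneg_left hv hc
  simpa using this

lemma my_sup_neg_nonneg (a : E) : 0 ≤ a ⊔ -a := by
  have h2 : (0:E) ≤ (a ⊔ -a) + (a ⊔ -a) := by
    calc (0:E) = a + (-a) := by abel
    _ ≤ (a ⊔ -a) + (a ⊔ -a) := add_le_add le_sup_left le_sup_right
  have := my_smul_nonneg (by norm_num : (0:ℝ) ≤ 2⁻¹) h2
  have heq : (2⁻¹ : ℝ) • ((a ⊔ -a) + (a ⊔ -a)) = a ⊔ -a := by
    rw [smul_add, ← add_smul]
    norm_num
  rwa [heq] at this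

lemma my_sup_neg_eq_zero {a : E} (h : a ⊔ -a = 0) : a = 0 := by
  have h1 : a ≤ 0 := h ▸ le_sup_left
  have h2 : -a ≤ 0 := h ▸ le_sup_right
  exact le_antisymm h1 (neg_nonpos.mp h2)

lemma my_add_eq_zero {a b : E} (ha : 0 ≤ a) (hb : 0 ≤ b) (h : a + b = 0) : a = 0 ∧ b = 0 := by
  constructor
  · exact le_antisymm (by calc a ≤ a + b := le_add_of_nonneg_right hb
                           _ = 0 := h) ha
  · exact le_antisymm (by calc b ≤ a + b := le_add_of_nonneg_left ha
                           _ = 0 := h) hb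

lemma my_sup_eq_zero {a b : E} (ha : 0 ≤ a) (hb : 0 ≤ b) (h : a ⊔ b = 0) : a = 0 ∧ b = 0 :=
  ⟨le_antisymm (h ▸ le_sup_left) ha, le_antisymm (h ▸ le_sup_right) hb⟩

lemma my_rsmul_eq_zero {c : ℝ} {v : E} (hc : c ≠ 0) (h : c • v = 0) : v = 0 := by
  have : c⁻¹ • (c • v) = v := by rw [smul_smul, inv_mul_cancel₀ hc, one_smul]
  rw [h, smul_zero] at this; exact this.symm

end OrderHelpers

section SmulC
variable {X E : Type*} [TopologicalSpace X] [TopologicalSpace E] [AddCommGroup E]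
  [Module ℝ E] [ContinuousSMul ℝ E]

/-- pointwise scalar multiplication of a real continuous function and a vector valued one -/
def smulC (c : C(X,ℝ)) (f : C(X,E)) : C(X,E) :=
  ⟨fun x => c x • f x, (map_continuous c).smul (map_continuous f)⟩

@[simp] lemma smulC_apply (c : C(X,ℝ)) (f : C(X,E)) (x : X) : smulC c f x = c x • f x := rfl

end SmulC

section Machinery

variable {X Y E F : Type*}
  [TopologicalSpace X] [CompletelyRegularSpace X]
  [TopologicalSpace Y] [CompletelyRegularSpace Y]
  [Lattice E] [AddCommGroup E] [Module ℝ E]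
  [CovariantClass E E (· + ·) (· ≤ ·)] [PosSMulMono ℝ E]
  [TopologicalSpace E] [IsTopologicalAddGroup E] [ContinuousSMul ℝ E]
  [TopologicalLattice E] [T2Space E]
  [Lattice F] [AddCommGroup F] [Module ℝ F]
  [CovariantClass F F (· + ·) (· ≤ ·)] [PosSMulMono ℝ F]
  [TopologicalSpace F] [IsTopologicalAddGroup F] [ContinuousSMul ℝ F]
  [TopologicalLattice F] [T2Space F]

variable (T : C(X, E) ≃ₗ[ℝ] C(Y, F))

lemma T_mono (hTlat : ∀ f g : C(X, E), T (f ⊔ g) = T f ⊔ T g)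
    {f g : C(X,E)} (h : f ≤ g) : T f ≤ T g := by
  have : T f ⊔ T g = T g := by rw [← hTlat, sup_eq_right.mpr h]
  exact le_of_sup_eq this

lemma T_nonneg (hTlat : ∀ f g : C(X, E), T (f ⊔ g) = T f ⊔ T g)
    {f : C(X,E)} (h : 0 ≤ f) : 0 ≤ T f := by
  have := T_mono T hTlat h
  rwa [map_zero] at this

lemma Tsymm_lat (hTlat : ∀ f g : C(X, E), T (f ⊔ g) = T f ⊔ T g) :
    ∀ g g' : C(Y,F), T.symm (g ⊔ g') = T.symm g ⊔ T.symm g' := by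
  intro g g'
  apply T.injective
  rw [T.apply_symm_apply, hTlat, T.apply_symm_apply, T.apply_symm_apply]

lemma Tsymm_z (hTz : ∀ f : C(X, E), {x | f x = 0}.Nonempty ↔ {y | T f y = 0}.Nonempty) :
    ∀ g : C(Y,F), {y | g y = 0}.Nonempty ↔ {x | T.symm g x = 0}.Nonempty := by
  intro g
  have := hTz (T.symm g)
  rw [T.apply_symm_apply] at this
  exact this.symm


/-- Key lemma: for every `y` and every real function `ψ` on `X`, there is `f` with
`T f y = 0` whose zero set is `ψ`-bounded. -/
lemma key_bounded {e₀ : E} (he0 : e₀ ≠ 0) (he0nn : 0 ≤ e₀)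
    (hTlat : ∀ f g : C(X, E), T (f ⊔ g) = T f ⊔ T g)
    (hTz : ∀ f : C(X, E), {x | f x = 0}.Nonempty ↔ {y | T f y = 0}.Nonempty)
    (x₀ : X) (y : Y) (ψ : C(X,ℝ)) :
    ∃ (f : C(X,E)) (s : ℝ), T f y = 0 ∧ ∀ x, f x = 0 → |ψ x| ≤ s := by
  classical
  set ψh : C(X,ℝ) := ⟨fun x => |ψ x|, (map_continuous ψ).abs⟩ with hψh
  set t₀ : ℝ := ψh x₀ with ht₀
  set c : ℕ → C(X,ℝ) := fun n => ((ψh - ContinuousMap.const X (t₀ + n)) ⊔ 0) ⊓ 1 with hc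
  have hc_apply : ∀ n x, c n x = (((ψh x) - (t₀ + n)) ⊔ 0) ⊓ 1 := by
    intro n x; simp [hc]
  have hc_nonneg : ∀ n x, 0 ≤ c n x := by
    intro n x
    rw [hc_apply]
    exact le_inf le_sup_right zero_le_one
  have hc_zero : ∀ n x, c n x = 0 ↔ ψh x ≤ t₀ + n := by
    intro n x
    rw [hc_apply]
    constructor
    · intro h
      by_contra hlt
      push_neg at hlt
      have h1 : (0:ℝ) < (ψh x - (t₀ + n)) ⊔ 0 := lt_sup_iff.mpr (Or.inl (by linarith))
      have h2 : (0:ℝ) < ((ψh x - (t₀ + n)) ⊔ 0) ⊓ 1 := lt_inf_iff.mpr ⟨h1, one_pos⟩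
      rw [h] at h2; exact lt_irrefl _ h2
    · intro h
      have h1 : (ψh x - (t₀ + n)) ⊔ 0 = 0 := sup_eq_right.mpr (by linarith)
      rw [h1]
      exact inf_eq_left.mpr zero_le_one
  set u : ℕ → C(X,E) := fun n => smulC (c n) (ContinuousMap.const X e₀) with hu
  have hu_apply : ∀ n x, u n x = c n x • e₀ := fun n x => rfl
  have hu_zero : ∀ n x, u n x = 0 ↔ ψh x ≤ t₀ + n := by
    intro n x
    rw [hu_apply, ← hc_zero n x]
    constructor
    · intro h
      by_contra hc0
      exact he0 (my_rsmul_eq_zero hc0 h)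
    · intro h; rw [h, zero_smul]
  have hu_nonneg : ∀ n, 0 ≤ u n := by
    intro n
    rw [ContinuousMap.le_def]
    intro x
    simpa [hu_apply] using my_smul_nonneg (hc_nonneg n x) he0nn
  by_cases hgood : ∃ n, T (u n) y = 0
  · obtain ⟨n, hn⟩ := hgood
    refine ⟨u n, t₀ + n, hn, fun x hx => ?_⟩
    have := (hu_zero n x).mp hx
    simpa [hψh] using this
  · push_neg at hgood
    have hA_closed : ∀ n : ℕ, IsClosed {y' : Y | T (u n) y' = 0} :=
      fun n => isClosed_eq (map_continuous (T (u n))) continuous_const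
    have hchoice : ∀ n : ℕ, ∃ φ : Y → unitInterval, Continuous φ ∧ φ y = 0 ∧
        EqOn φ 1 {y' : Y | T (u n) y' = 0} := by
      intro n
      exact CompletelyRegularSpace.completely_regular y _ (hA_closed n) (hgood n)
    choose φ hφc hφ0 hφ1 using hchoice
    -- the function ξ
    have hterm_cont : ∀ n : ℕ, Continuous (fun y' : Y => (2⁻¹:ℝ)^(n+1) * (φ n y' : ℝ)) :=
      fun n => continuous_const.mul (continuous_subtype_val.comp (hφc n))
    have hterm_nonneg : ∀ (n : ℕ) (y' : Y), 0 ≤ (2⁻¹:ℝ)^(n+1) * (φ n y' : ℝ) :=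
      fun n y' => mul_nonneg (by positivity) (φ n y').2.1
    have hterm_bdd : ∀ (n : ℕ) (y' : Y), ‖(2⁻¹:ℝ)^(n+1) * (φ n y' : ℝ)‖ ≤ (2⁻¹:ℝ)^n := by
      intro n y'
      rw [Real.norm_eq_abs, abs_of_nonneg (hterm_nonneg n y')]
      calc (2⁻¹:ℝ)^(n+1) * (φ n y' : ℝ) ≤ (2⁻¹:ℝ)^(n+1) * 1 :=
            mul_le_mul_of_nonneg_left (φ n y').2.2 (by positivity)
        _ ≤ (2⁻¹:ℝ)^n := by
            rw [mul_one, pow_succ]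
            nlinarith [pow_pos (by norm_num : (0:ℝ) < 2⁻¹) n]
    have hsummable : Summable (fun n : ℕ => (2⁻¹:ℝ)^n) := summable_geometric_of_lt_one
      (by norm_num) (by norm_num)
    have hsummable_pt : ∀ y' : Y, Summable (fun n : ℕ => (2⁻¹:ℝ)^(n+1) * (φ n y' : ℝ)) := by
      intro y'
      apply Summable.of_nonneg_of_le (fun n => hterm_nonneg n y') (fun n => ?_) hsummable
      have := hterm_bdd n y'
      rwa [Real.norm_eq_abs, abs_of_nonneg (hterm_nonneg n y')] at this
    set ξ : C(Y,ℝ) := ⟨fun y' => ∑' n : ℕ, (2⁻¹:ℝ)^(n+1) * (φ n y' : ℝ),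
      continuous_tsum hterm_cont hsummable hterm_bdd⟩ with hξ
    have hξy : ξ y = 0 := by
      have : ∀ n : ℕ, (2⁻¹:ℝ)^(n+1) * (φ n y : ℝ) = 0 := by
        intro n; rw [hφ0 n]; simp
      simp only [hξ, ContinuousMap.coe_mk]
      rw [tsum_congr this, tsum_zero]
    have hξnn : ∀ y', 0 ≤ ξ y' := fun y' => tsum_nonneg (fun n => hterm_nonneg n y')
    have hξpos : ∀ (n : ℕ) (y' : Y), T (u n) y' = 0 → (0:ℝ) < ξ y' := by
      intro n y' hy'
      have h1 : (φ n y' : ℝ) = 1 := by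
        have := hφ1 n (by exact hy' : y' ∈ {y' : Y | T (u n) y' = 0})
        rw [this]; rfl
      have h2 : (2⁻¹:ℝ)^(n+1) * (φ n y' : ℝ) ≤ ξ y' :=
        Summable.le_tsum (hsummable_pt y') n (fun j _ => hterm_nonneg j y')
      have : (0:ℝ) < (2⁻¹:ℝ)^(n+1) * (φ n y' : ℝ) := by rw [h1]; positivity
      linarith
    -- the function C
    set Cm : C(Y,F) := T (ContinuousMap.const X e₀) with hCm
    have hCnn : 0 ≤ Cm := T_nonneg T hTlat (by
      rw [ContinuousMap.le_def]; intro x; simpa using he0nn)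
    have hCne : ∀ y', Cm y' ≠ 0 := by
      intro y' h0
      have : {x : X | (ContinuousMap.const X e₀) x = 0}.Nonempty :=
        (hTz _).mpr ⟨y', h0⟩
      obtain ⟨x, hx⟩ := this
      exact he0 (by simpa using hx)
    set g : C(Y,F) := smulC ξ Cm with hg
    set fbar : C(X,E) := T.symm g with hfbar
    have hTfbar : T fbar = g := T.apply_symm_apply g
    have hgy : g y = 0 := by simp [hg, hξy]
    have hZfbar : {x | fbar x = 0}.Nonempty := by
      apply (hTz fbar).mpr
      exact ⟨y, by rw [mem_setOf_eq, hTfbar]; exact hgy⟩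
    obtain ⟨xs, hxs⟩ := hZfbar
    set ns : ℕ := ⌈ψh xs - t₀⌉₊ with hns
    have hxs_le : ψh xs ≤ t₀ + ns := by
      have := Nat.le_ceil (ψh xs - t₀)
      rw [← hns] at this
      linarith
    set q : C(X,E) := fbar + u ns with hq
    have hZq : {x | q x = 0}.Nonempty := by
      refine ⟨xs, ?_⟩
      rw [mem_setOf_eq, hq, ContinuousMap.add_apply, hxs, zero_add]
      exact (hu_zero ns xs).mpr hxs_le
    have hZTq : ¬ {y' | T q y' = 0}.Nonempty := by
      rintro ⟨y', hy'⟩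
      rw [mem_setOf_eq, hq, map_add, ContinuousMap.add_apply, hTfbar] at hy'
      have hgnn : 0 ≤ g y' := by
        simpa [hg] using my_smul_nonneg (hξnn y') (ContinuousMap.le_def.mp hCnn y')
      have hunn : 0 ≤ T (u ns) y' :=
        ContinuousMap.le_def.mp (T_nonneg T hTlat (hu_nonneg ns)) y'
      obtain ⟨hgz, huz⟩ := my_add_eq_zero hgnn hunn hy'
      have hpos := hξpos ns y' huz
      have : Cm y' = 0 := my_rsmul_eq_zero (ne_of_gt hpos) (by simpa [hg] using hgz)
      exact hCne y' this
    exact absurd ((hTz q).mp hZq) hZTq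

lemma exists_pt (hX : Realcompact X)
    {e₀ : E} (he0 : e₀ ≠ 0) (he0nn : 0 ≤ e₀)
    (hTlat : ∀ f g : C(X, E), T (f ⊔ g) = T f ⊔ T g)
    (hTz : ∀ f : C(X, E), {x | f x = 0}.Nonempty ↔ {y | T f y = 0}.Nonempty)
    (x₀ : X) (y : Y) :
    ∃ x : X, ∀ f : C(X,E), T f y = 0 → f x = 0 := by
  classical
  have hIne : Nonempty {f : C(X,E) // T f y = 0} := ⟨⟨0, by simp⟩⟩
  set K : {f : C(X,E) // T f y = 0} → Set (StoneCech X) :=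
    fun f => closure (stoneCechUnit '' {x | f.1 x = 0}) with hK
  have hdir : Directed (· ⊇ ·) K := by
    intro f g
    set m : C(X,E) := (f.1 ⊔ -f.1) ⊔ (g.1 ⊔ -g.1) with hm
    have hTm : T m y = 0 := by
      have hTm' : T m = (T f.1 ⊔ -(T f.1)) ⊔ (T g.1 ⊔ -(T g.1)) := by
        rw [hm, hTlat, hTlat, hTlat, map_neg, map_neg]
      rw [hTm']
      simp [ContinuousMap.sup_apply, ContinuousMap.neg_apply, f.2, g.2]
    have hsub : ∀ h : {f : C(X,E) // T f y = 0},
        (∀ x : X, m x = 0 → h.1 x = 0) → K ⟨m, hTm⟩ ⊆ K h := by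
      intro h hh
      apply closure_mono; apply image_mono
      intro x hx
      exact hh x hx
    have hmf : ∀ x : X, m x = 0 → f.1 x = 0 := by
      intro x hx
      rw [hm] at hx
      simp only [ContinuousMap.sup_apply, ContinuousMap.neg_apply] at hx
      exact my_sup_neg_eq_zero (my_sup_eq_zero (my_sup_neg_nonneg _) (my_sup_neg_nonneg _) hx).1
    have hmg : ∀ x : X, m x = 0 → g.1 x = 0 := by
      intro x hx
      rw [hm] at hx
      simp only [ContinuousMap.sup_apply, ContinuousMap.neg_apply] at hx
      exact my_sup_neg_eq_zero (my_sup_eq_zero (my_sup_neg_nonneg _) (my_sup_neg_nonneg _) hx).2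
    exact ⟨⟨m, hTm⟩, hsub f hmf, hsub g hmg⟩
  have hne : ∀ f : {f : C(X,E) // T f y = 0}, (K f).Nonempty := by
    intro f
    obtain ⟨x, hx⟩ : {x | f.1 x = 0}.Nonempty := (hTz f.1).mpr ⟨y, f.2⟩
    exact ⟨stoneCechUnit x, subset_closure ⟨x, hx, rfl⟩⟩
  have hcl : ∀ f : {f : C(X,E) // T f y = 0}, IsClosed (K f) := fun f => isClosed_closure
  have hcp : ∀ f : {f : C(X,E) // T f y = 0}, IsCompact (K f) := fun f => (hcl f).isCompact
  obtain ⟨p, hp⟩ :=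
    IsCompact.nonempty_iInter_of_directed_nonempty_isCompact_isClosed K hdir hne hcp hcl
  have hpK : ∀ f : {f : C(X,E) // T f y = 0}, p ∈ K f := fun f => mem_iInter.mp hp f
  have hpυ : p ∈ hewittRealcompactification X := by
    intro ψ
    obtain ⟨f, s, hfy, hbd⟩ := key_bounded T he0 he0nn hTlat hTz x₀ y ψ
    have hpf : p ∈ K ⟨f, hfy⟩ := hpK _
    set A : Set (OnePoint ℝ) := (fun r : ℝ => (r : OnePoint ℝ)) '' Icc (-s) s with hA
    have hAcl : IsClosed A := (isCompact_Icc.image OnePoint.continuous_coe).isClosed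
    have hsub : stoneCechUnit '' {x | f x = 0} ⊆ (onePointExt ψ) ⁻¹' A := by
      rintro _ ⟨x, hx, rfl⟩
      have hext : onePointExt ψ (stoneCechUnit x) = ((ψ x : ℝ) : OnePoint ℝ) :=
        congrFun (stoneCechExtend_extends (OnePoint.continuous_coe.comp ψ.continuous)) x
      rw [mem_preimage, hext]
      refine ⟨ψ x, ?_, rfl⟩
      have := abs_le.mp (hbd x hx)
      exact ⟨this.1, this.2⟩
    have hpA : p ∈ (onePointExt ψ) ⁻¹' A :=
      closure_minimal hsub (hAcl.preimage (continuous_stoneCechExtend _)) hpf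
    obtain ⟨r, _, hr⟩ := hpA
    rw [← hr]
    exact OnePoint.coe_ne_infty r
  have hpr : p ∈ Set.range (stoneCechUnit : X → StoneCech X) := by rw [hX]; exact hpυ
  obtain ⟨xb, hxb⟩ := hpr
  refine ⟨xb, fun f hf => ?_⟩
  by_contra hne0
  have hZcl : IsClosed {x | f x = 0} := isClosed_eq (map_continuous f) continuous_const
  obtain ⟨φ, hφc, hφ0, hφ1⟩ := CompletelyRegularSpace.completely_regular xb _ hZcl hne0
  have hpf : p ∈ K ⟨f, hf⟩ := hpK _
  have hsub : stoneCechUnit '' {x | f x = 0} ⊆ (stoneCechExtend hφc) ⁻¹' {(1 : unitInterval)} := by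
    rintro _ ⟨x, hx, rfl⟩
    have hext : stoneCechExtend hφc (stoneCechUnit x) = φ x := by
      have := congrFun (stoneCechExtend_extends hφc) x
      simpa [Function.comp] using this
    rw [mem_preimage, hext]
    simpa using hφ1 hx
  have hmem : p ∈ (stoneCechExtend hφc) ⁻¹' {(1:unitInterval)} :=
    closure_minimal hsub (isClosed_singleton.preimage (continuous_stoneCechExtend _)) hpf
  have hext : stoneCechExtend hφc (stoneCechUnit xb) = φ xb := by
    have := congrFun (stoneCechExtend_extends hφc) xb
    simpa [Function.comp] using this
  rw [← hxb, mem_preimage, hext, hφ0] at hmem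
  exact zero_ne_one (by simpa using hmem : (0:unitInterval) = 1)


end Machinery

theorem lattice_version {X Y E F : Type*}
    [TopologicalSpace X] [T2Space X] [CompletelyRegularSpace X]
    [TopologicalSpace Y] [T2Space Y] [CompletelyRegularSpace Y]
    (hX : Realcompact X) (hY : Realcompact Y)
    [Lattice E] [AddCommGroup E] [Module ℝ E]
    [CovariantClass E E (· + ·) (· ≤ ·)] [PosSMulMono ℝ E]
    [TopologicalSpace E] [IsTopologicalAddGroup E] [ContinuousSMul ℝ E]
    [TopologicalLattice E] [T2Space E] [Nontrivial E]
    [Lattice F] [AddCommGroup F] [Module ℝ F]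
    [CovariantClass F F (· + ·) (· ≤ ·)] [PosSMulMono ℝ F]
    [TopologicalSpace F] [IsTopologicalAddGroup F] [ContinuousSMul ℝ F]
    [TopologicalLattice F] [T2Space F] [Nontrivial F]
    (T : C(X, E) ≃ₗ[ℝ] C(Y, F))
    (hTlat : ∀ f g : C(X, E), T (f ⊔ g) = T f ⊔ T g)
    (hTz : ∀ f : C(X, E), {x | f x = 0}.Nonempty ↔ {y | T f y = 0}.Nonempty) :
    ∃ (h : Y ≃ₜ X) (S : Y → (E ≃ₗ[ℝ] F)),
      (∀ (y : Y) (u v : E), S y (u ⊔ v) = S y u ⊔ S y v) ∧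
      ∀ (f : C(X, E)) (y : Y), T f y = S y (f (h y)) := by
  classical
  by_cases hXE : IsEmpty X
  · have hYE : IsEmpty Y := by
      by_contra hcon
      rw [not_isEmpty_iff] at hcon
      obtain ⟨y₀⟩ := hcon
      obtain ⟨v, hv⟩ := exists_ne (0 : F)
      have heq : T.symm (ContinuousMap.const Y v) = T.symm 0 :=
        ContinuousMap.ext (fun x => hXE.elim x)
      have h0 : (ContinuousMap.const Y v) = 0 := T.symm.injective heq
      exact hv (by simpa using congrArg (fun g : C(Y,F) => g y₀) h0)
    haveI := hXE
    haveI := hYE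
    refine ⟨{ toEquiv := Equiv.equivOfIsEmpty Y X,
              continuous_toFun := ⟨fun s _ => by
                rw [Set.eq_empty_of_isEmpty (_ ⁻¹' s)]; exact isOpen_empty⟩,
              continuous_invFun := ⟨fun s _ => by
                rw [Set.eq_empty_of_isEmpty (_ ⁻¹' s)]; exact isOpen_empty⟩ },
      fun y => isEmptyElim y, fun y => isEmptyElim y, fun f y => isEmptyElim y⟩
  · rw [not_isEmpty_iff] at hXE
    obtain ⟨x₀⟩ := hXE
    obtain ⟨a, ha⟩ := exists_ne (0 : E)
    set e₀ : E := a ⊔ -a with he₀def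
    have he0 : e₀ ≠ 0 := fun h => ha (my_sup_neg_eq_zero h)
    have he0nn : 0 ≤ e₀ := my_sup_neg_nonneg a
    have hYne : Nonempty Y := by
      by_contra hcon
      rw [not_nonempty_iff] at hcon
      have heq : T (ContinuousMap.const X e₀) = T 0 :=
        ContinuousMap.ext (fun y => hcon.elim y)
      have h0 : (ContinuousMap.const X e₀) = 0 := T.injective heq
      exact he0 (by simpa using congrArg (fun g : C(X,E) => g x₀) h0)
    obtain ⟨y₀⟩ := hYne
    obtain ⟨b, hb⟩ := exists_ne (0 : F)
    set e₀' : F := b ⊔ -b with he₀'def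
    have he0' : e₀' ≠ 0 := fun h => hb (my_sup_neg_eq_zero h)
    have he0nn' : 0 ≤ e₀' := my_sup_neg_nonneg b
    have hTlat' := Tsymm_lat T hTlat
    have hTz' := Tsymm_z T hTz
    -- the two zero-free reference functions
    set CY : C(Y,F) := T (ContinuousMap.const X e₀) with hCY
    have hCYne : ∀ y', CY y' ≠ 0 := by
      intro y' h0
      obtain ⟨x, hx⟩ : {x : X | (ContinuousMap.const X e₀) x = 0}.Nonempty := (hTz _).mpr ⟨y', h0⟩
      exact he0 (by simpa using hx)
    set CX : C(X,E) := T.symm (ContinuousMap.const Y e₀') with hCX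
    have hCXne : ∀ x, CX x ≠ 0 := by
      intro x h0
      obtain ⟨y', hy'⟩ : {y' : Y | (ContinuousMap.const Y e₀') y' = 0}.Nonempty :=
        (hTz' _).mpr ⟨x, h0⟩
      exact he0' (by simpa using hy')
    -- point maps
    have hfwd : ∀ y : Y, ∃ x : X, ∀ f : C(X,E), T f y = 0 → f x = 0 :=
      fun y => exists_pt T hX he0 he0nn hTlat hTz x₀ y
    have hbwd : ∀ x : X, ∃ y : Y, ∀ g : C(Y,F), T.symm g x = 0 → g y = 0 :=
      fun x => exists_pt T.symm hY he0' he0nn' hTlat' hTz' y₀ x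
    choose H0 hH0 using hfwd
    choose G0 hG0 using hbwd
    -- separation
    have sepY : ∀ y₁ y₂ : Y, (∀ g : C(Y,F), g y₁ = 0 → g y₂ = 0) → y₂ = y₁ := by
      intro y₁ y₂ hsep
      by_contra hne
      have hy1 : y₁ ∉ ({y₂} : Set Y) := by
        simp only [mem_singleton_iff]
        exact fun h => hne h.symm
      obtain ⟨φ, hφc, hφ0, hφ1⟩ :=
        CompletelyRegularSpace.completely_regular y₁ {y₂} isClosed_singleton hy1
      set φr : C(Y,ℝ) := ⟨fun y' => (φ y' : ℝ), continuous_subtype_val.comp hφc⟩ with hφr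
      set g : C(Y,F) := smulC φr CY with hgdef
      have hg1 : g y₁ = 0 := by
        simp [hgdef, hφr, hφ0]
      have hg2 := hsep g hg1
      have hφ12 : (φ y₂ : ℝ) = 1 := by
        have := hφ1 (mem_singleton y₂)
        rw [this]; rfl
      rw [hgdef] at hg2
      simp only [smulC_apply, hφr, ContinuousMap.coe_mk, hφ12, one_smul] at hg2
      exact hCYne y₂ hg2
    have sepX : ∀ x₁ x₂ : X, (∀ f : C(X,E), f x₁ = 0 → f x₂ = 0) → x₂ = x₁ := by
      intro x₁ x₂ hsep
      by_contra hne
      have hx1 : x₁ ∉ ({x₂} : Set X) := by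
        simp only [mem_singleton_iff]
        exact fun h => hne h.symm
      obtain ⟨φ, hφc, hφ0, hφ1⟩ :=
        CompletelyRegularSpace.completely_regular x₁ {x₂} isClosed_singleton hx1
      set φr : C(X,ℝ) := ⟨fun x' => (φ x' : ℝ), continuous_subtype_val.comp hφc⟩ with hφr
      set f : C(X,E) := smulC φr CX with hfdef
      have hf1 : f x₁ = 0 := by
        simp [hfdef, hφr, hφ0]
      have hf2 := hsep f hf1
      have hφ12 : (φ x₂ : ℝ) = 1 := by
        have := hφ1 (mem_singleton x₂)
        rw [this]; rfl
      rw [hfdef] at hf2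
      simp only [smulC_apply, hφr, ContinuousMap.coe_mk, hφ12, one_smul] at hf2
      exact hCXne x₂ hf2
    -- the iff properties
    have hiff : ∀ (y : Y) (f : C(X,E)), T f y = 0 ↔ f (H0 y) = 0 := by
      intro y f
      constructor
      · exact hH0 y f
      · intro hfx
        have hGH : G0 (H0 y) = y := by
          apply sepY y (G0 (H0 y))
          intro g hgy
          refine hG0 (H0 y) g (hH0 y (T.symm g) ?_)
          rw [T.apply_symm_apply]; exact hgy
        have h3 : T.symm (T f) (H0 y) = 0 := by rw [T.symm_apply_apply]; exact hfx
        have h4 := hG0 (H0 y) (T f) h3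
        rwa [hGH] at h4
    have hiff' : ∀ (x : X) (g : C(Y,F)), T.symm g x = 0 ↔ g (G0 x) = 0 := by
      intro x g
      constructor
      · exact hG0 x g
      · intro hgy
        have hHG : H0 (G0 x) = x := by
          apply sepX x (H0 (G0 x))
          intro f hfx
          refine hH0 (G0 x) f (hG0 x (T f) ?_)
          rw [T.symm_apply_apply]; exact hfx
        have h3 : T (T.symm g) (G0 x) = 0 := by rw [T.apply_symm_apply]; exact hgy
        have h4 := hH0 (G0 x) (T.symm g) h3
        rwa [hHG] at h4
    -- inverse identities
    have hGH : ∀ y, G0 (H0 y) = y := by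
      intro y
      apply sepY y (G0 (H0 y))
      intro g hgy
      apply hG0 (H0 y) g
      apply (hiff y (T.symm g)).mp
      rw [T.apply_symm_apply]; exact hgy
    have hHG : ∀ x, H0 (G0 x) = x := by
      intro x
      apply sepX x (H0 (G0 x))
      intro f hfx
      apply hH0 (G0 x) f
      apply (hiff' x (T f)).mp
      rw [T.symm_apply_apply]; exact hfx
    -- continuity
    have hH0cont : Continuous H0 := by
      rw [continuous_iff_continuousAt]
      intro y
      rw [ContinuousAt, Filter.tendsto_def]
      intro U hU
      obtain ⟨V, hVU, hVopen, hVmem⟩ := mem_nhds_iff.mp hU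
      have hnotmem : H0 y ∉ Vᶜ := by simpa using hVmem
      obtain ⟨φ, hφc, hφ0, hφ1⟩ :=
        CompletelyRegularSpace.completely_regular (H0 y) Vᶜ hVopen.isClosed_compl hnotmem
      set φr : C(X,ℝ) := ⟨fun x' => (φ x' : ℝ), continuous_subtype_val.comp hφc⟩ with hφr
      set f : C(X,E) := smulC ((ContinuousMap.const X (2⁻¹:ℝ) - φr) ⊔ 0) (ContinuousMap.const X e₀)
        with hfdef
      have hfval : ∀ x', f x' = (((2⁻¹:ℝ) - (φ x' : ℝ)) ⊔ 0) • e₀ := by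
        intro x'; simp [hfdef, hφr]
      have hfy : f (H0 y) ≠ 0 := by
        rw [hfval, hφ0]
        intro hcon
        have h05 : ((2⁻¹:ℝ) - ((0:unitInterval) : ℝ)) ⊔ 0 = 2⁻¹ := by
          rw [show ((0:unitInterval):ℝ) = 0 from rfl, sub_zero]
          exact sup_eq_left.mpr (by norm_num)
        rw [h05] at hcon
        exact he0 (my_rsmul_eq_zero (by norm_num) hcon)
      have hfoff : ∀ x', x' ∉ V → f x' = 0 := by
        intro x' hx'
        have hφ1' : (φ x' : ℝ) = 1 := by
          have := hφ1 (by simpa using hx')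
          rw [this]; rfl
        rw [hfval, hφ1']
        have : ((2⁻¹:ℝ) - 1) ⊔ 0 = 0 := sup_eq_right.mpr (by norm_num)
        rw [this, zero_smul]
      have hWopen : IsOpen {y' : Y | T f y' ≠ 0} :=
        (isClosed_eq (map_continuous (T f)) continuous_const).isOpen_compl
      have hyW : y ∈ {y' : Y | T f y' ≠ 0} := by
        intro hcon
        exact hfy ((hiff y f).mp hcon)
      refine mem_nhds_iff.mpr ⟨{y' : Y | T f y' ≠ 0}, ?_, hWopen, hyW⟩
      intro y' hy'
      apply hVU
      by_contra hnot
      exact hy' ((hiff y' f).mpr (hfoff (H0 y') hnot))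
    have hG0cont : Continuous G0 := by
      rw [continuous_iff_continuousAt]
      intro x
      rw [ContinuousAt, Filter.tendsto_def]
      intro U hU
      obtain ⟨V, hVU, hVopen, hVmem⟩ := mem_nhds_iff.mp hU
      have hnotmem : G0 x ∉ Vᶜ := by simpa using hVmem
      obtain ⟨φ, hφc, hφ0, hφ1⟩ :=
        CompletelyRegularSpace.completely_regular (G0 x) Vᶜ hVopen.isClosed_compl hnotmem
      set φr : C(Y,ℝ) := ⟨fun y' => (φ y' : ℝ), continuous_subtype_val.comp hφc⟩ with hφr
      set g : C(Y,F) := smulC ((ContinuousMap.const Y (2⁻¹:ℝ) - φr) ⊔ 0) (ContinuousMap.const Y e₀')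
        with hgdef
      have hgval : ∀ y', g y' = (((2⁻¹:ℝ) - (φ y' : ℝ)) ⊔ 0) • e₀' := by
        intro y'; simp [hgdef, hφr]
      have hgy : g (G0 x) ≠ 0 := by
        rw [hgval, hφ0]
        intro hcon
        have h05 : ((2⁻¹:ℝ) - ((0:unitInterval) : ℝ)) ⊔ 0 = 2⁻¹ := by
          rw [show ((0:unitInterval):ℝ) = 0 from rfl, sub_zero]
          exact sup_eq_left.mpr (by norm_num)
        rw [h05] at hcon
        exact he0' (my_rsmul_eq_zero (by norm_num) hcon)
      have hgoff : ∀ y', y' ∉ V → g y' = 0 := by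
        intro y' hy'
        have hφ1' : (φ y' : ℝ) = 1 := by
          have := hφ1 (by simpa using hy')
          rw [this]; rfl
        rw [hgval, hφ1']
        have : ((2⁻¹:ℝ) - 1) ⊔ 0 = 0 := sup_eq_right.mpr (by norm_num)
        rw [this, zero_smul]
      have hWopen : IsOpen {x' : X | T.symm g x' ≠ 0} :=
        (isClosed_eq (map_continuous (T.symm g)) continuous_const).isOpen_compl
      have hxW : x ∈ {x' : X | T.symm g x' ≠ 0} := by
        intro hcon
        exact hgy ((hiff' x g).mp hcon)
      refine mem_nhds_iff.mpr ⟨{x' : X | T.symm g x' ≠ 0}, ?_, hWopen, hxW⟩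
      intro x' hx'
      apply hVU
      by_contra hnot
      exact hx' ((hiff' x' g).mpr (hgoff (G0 x') hnot))
    -- representation
    have hrep : ∀ (f : C(X,E)) (y : Y), T f y = T (ContinuousMap.const X (f (H0 y))) y := by
      intro f y
      have hd : (f - ContinuousMap.const X (f (H0 y))) (H0 y) = 0 := by
        simp
      have h2 : T (f - ContinuousMap.const X (f (H0 y))) y = 0 := (hiff y _).mpr hd
      rw [map_sub, ContinuousMap.sub_apply] at h2
      exact sub_eq_zero.mp h2
    -- the linear maps
    set L : Y → (E →ₗ[ℝ] F) := fun y =>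
      { toFun := fun u => T (ContinuousMap.const X u) y
        map_add' := by
          intro u v
          show T (ContinuousMap.const X (u + v)) y =
            T (ContinuousMap.const X u) y + T (ContinuousMap.const X v) y
          have hcc : (ContinuousMap.const X (u + v)) =
              ContinuousMap.const X u + ContinuousMap.const X v := ContinuousMap.ext fun x => rfl
          rw [hcc, map_add, ContinuousMap.add_apply]
        map_smul' := by
          intro c u
          show T (ContinuousMap.const X (c • u)) y = c • T (ContinuousMap.const X u) y
          have hcc : (ContinuousMap.const X (c • u)) = c • ContinuousMap.const X u :=
            ContinuousMap.ext fun x => rfl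
          rw [hcc, map_smul, ContinuousMap.smul_apply] } with hL
    have hLbij : ∀ y, Function.Bijective (L y) := by
      intro y
      constructor
      · intro u v huv
        have hz : L y (u - v) = 0 := by
          rw [map_sub, huv, sub_self]
        have : T (ContinuousMap.const X (u - v)) y = 0 := hz
        obtain ⟨x, hx⟩ : {x : X | (ContinuousMap.const X (u-v)) x = 0}.Nonempty :=
          (hTz _).mpr ⟨y, this⟩
        have : u - v = 0 := by simpa using hx
        exact sub_eq_zero.mp this
      · intro v
        refine ⟨(T.symm (ContinuousMap.const Y v)) (H0 y), ?_⟩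
        show T (ContinuousMap.const X ((T.symm (ContinuousMap.const Y v)) (H0 y))) y = v
        rw [← hrep (T.symm (ContinuousMap.const Y v)) y, T.apply_symm_apply]
        rfl
    set S : Y → (E ≃ₗ[ℝ] F) := fun y => LinearEquiv.ofBijective (L y) (hLbij y) with hS
    have hSapp : ∀ (y : Y) (u : E), S y u = T (ContinuousMap.const X u) y := fun y u => rfl
    refine ⟨⟨⟨H0, G0, hGH, hHG⟩, hH0cont, hG0cont⟩, S, ?_, ?_⟩
    · intro y u v
      rw [hSapp, hSapp, hSapp]
      have hconst : (ContinuousMap.const X (u ⊔ v)) =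
          ContinuousMap.const X u ⊔ ContinuousMap.const X v := by
        apply ContinuousMap.ext
        intro x
        simp
      rw [hconst, hTlat]
      simp
    · intro f y
      rw [hSapp]
      exact hrep f y
end

section
/- Let X and Y be open subsets of ℝ^p and ℝ^q respectively (p, q ∈ ℕ). Suppose Z is a dense subset of βY that is homeomorphic to X. Then Z ⊆ ι_Y(Y). -/
open Set Filter Topology

theorem dense_homeomorphic_subset_of_stoneCech_subset_range
    {p q : ℕ} (X : Set (Fin p → ℝ)) (Y : Set (Fin q → ℝ))
    (hX : IsOpen X) (hY : IsOpen Y)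
    (Z : Set (StoneCech Y)) (hZ : Dense Z) (hhomeo : Nonempty (Z ≃ₜ X)) :
    Z ⊆ Set.range (stoneCechUnit : Y → StoneCech Y) := by
  obtain ⟨e⟩ := hhomeo
  haveI hXlc : LocallyCompactSpace X := hX.locallyCompactSpace
  haveI hZlc : LocallyCompactSpace Z := e.locallyCompactSpace_iff.mpr hXlc
  haveI hZfc : FirstCountableTopology Z :=
    e.isEmbedding.firstCountableTopology
  -- Step 1: Z is open in βY
  have hZopen : IsOpen Z := by
    rw [isOpen_iff_mem_nhds]
    intro z hzZ
    obtain ⟨K, hKc, hKn⟩ := exists_compact_mem_nhds (⟨z, hzZ⟩ : Z)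
    have hK : IsCompact (Subtype.val '' K) := hKc.image continuous_subtype_val
    have hmem : Subtype.val '' K ∈ 𝓝[Z] z := by
      have h1 : Filter.map (Subtype.val : Z → StoneCech Y) (𝓝 (⟨z, hzZ⟩ : Z)) = 𝓝[Z] z := by
        rw [Topology.IsInducing.subtypeVal.map_nhds_eq, Subtype.range_coe]
      rw [← h1]
      exact Filter.image_mem_map hKn
    rw [mem_nhdsWithin] at hmem
    obtain ⟨V, hVopen, hzV, hVsub⟩ := hmem
    have hVK : V ⊆ Subtype.val '' K := by
      calc V ⊆ closure (V ∩ Z) := hZ.open_subset_closure_inter hVopen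
        _ ⊆ closure (Subtype.val '' K) := closure_mono hVsub
        _ = Subtype.val '' K := hK.isClosed.closure_eq
    exact Filter.mem_of_superset (hVopen.mem_nhds hzV)
      (hVK.trans (by rintro _ ⟨k, _, rfl⟩; exact k.2))
  -- Main argument
  classical
  intro z hzZ
  by_contra hz
  haveI hYne : Nonempty Y := by
    rcases isEmpty_or_nonempty Y with h | h
    · have := denseRange_stoneCechUnit (α := Y) z
      rw [Set.range_eq_empty, closure_empty] at this
      exact absurd this (Set.notMem_empty z)
    · exact h
  -- 𝓝 z is countably generated
  have hmap : Filter.map (Subtype.val : Z → StoneCech Y) (𝓝 (⟨z, hzZ⟩ : Z)) = 𝓝 z :=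
    hZopen.isOpenEmbedding_subtypeVal.map_nhds_eq _
  haveI hcg : (𝓝 z).IsCountablyGenerated := by rw [← hmap]; infer_instance
  haveI : (𝓝[Set.range (stoneCechUnit : Y → StoneCech Y)] z).IsCountablyGenerated := by
    rw [nhdsWithin]; infer_instance
  haveI : (𝓝[Set.range (stoneCechUnit : Y → StoneCech Y)] z).NeBot :=
    mem_closure_iff_nhdsWithin_neBot.mp (denseRange_stoneCechUnit (α := Y) z)
  obtain ⟨u, hu⟩ :=
    Filter.exists_seq_tendsto (𝓝[Set.range (stoneCechUnit : Y → StoneCech Y)] z)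
  have hmemr : ∀ᶠ n in atTop, u n ∈ Set.range (stoneCechUnit : Y → StoneCech Y) :=
    eventually_mem_of_tendsto_nhdsWithin hu
  set y : ℕ → Y := fun n =>
    if h : u n ∈ Set.range (stoneCechUnit : Y → StoneCech Y) then h.choose
    else Classical.arbitrary Y with hydef
  have hy : ∀ᶠ n in atTop, stoneCechUnit (y n) = u n := by
    filter_upwards [hmemr] with n h
    simp only [hydef, dif_pos h]
    exact h.choose_spec
  have hyt : Tendsto (fun n => stoneCechUnit (y n)) atTop (𝓝 z) :=
    (hu.mono_right nhdsWithin_le_nhds).congr' (hy.mono fun n h => h.symm)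
  -- any convergent subsequence of y would put z in the range
  have hlim : ∀ φ : ℕ → ℕ, StrictMono φ → ∀ w : Y,
      Tendsto (y ∘ φ) atTop (𝓝 w) → False := by
    intro φ hφ w hw
    have h1 : Tendsto (fun n => stoneCechUnit (y (φ n))) atTop (𝓝 (stoneCechUnit w)) :=
      (continuous_stoneCechUnit.tendsto w).comp hw
    have h2 : Tendsto (fun n => stoneCechUnit (y (φ n))) atTop (𝓝 z) :=
      hyt.comp hφ.tendsto_atTop
    exact hz ⟨w, tendsto_nhds_unique h1 h2⟩
  have hnoclus : ∀ w : Y, ¬ MapClusterPt w atTop y := by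
    intro w hw
    obtain ⟨ψ, hψ, hts⟩ := TopologicalSpace.FirstCountableTopology.tendsto_subseq hw
    exact hlim ψ hψ w hts
  -- fibers of y are finite
  have hfib : ∀ v : Y, {n | y n = v}.Finite := by
    intro v
    by_contra hinf
    obtain ⟨φ, hφ, hpv⟩ := Filter.extraction_of_frequently_atTop
      (Nat.frequently_atTop_iff_infinite.mpr hinf)
    have : (y ∘ φ) = fun _ => v := funext hpv
    exact hlim φ hφ v (this ▸ tendsto_const_nhds)
  -- range of y is infinite
  have hrinf : (Set.range y).Infinite := by
    intro hfin
    have hsub : (Set.univ : Set ℕ) ⊆ ⋃ v ∈ Set.range y, {n | y n = v} := fun n _ =>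
      Set.mem_biUnion ⟨n, rfl⟩ rfl
    exact Set.infinite_univ ((hfin.biUnion fun v _ => hfib v).subset hsub)
  -- infinite subsets of the range are visited frequently
  have hfreq : ∀ S : Set Y, S.Infinite → S ⊆ Set.range y → ∃ᶠ n in atTop, y n ∈ S := by
    intro S hSinf hSsub
    rw [Filter.frequently_atTop]
    intro N
    have hfin : (y '' Set.Iio N).Finite := (Set.finite_Iio N).image y
    obtain ⟨v, hvS, hvn⟩ := (hSinf.diff hfin).nonempty
    obtain ⟨n, rfl⟩ := hSsub hvS
    refine ⟨n, ?_, hvS⟩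
    by_contra hn
    exact hvn ⟨n, lt_of_not_ge hn, rfl⟩
  -- subsets of the range of y are closed in Y
  have hclosed : ∀ S : Set Y, S ⊆ Set.range y → IsClosed S := by
    intro S hSsub
    rw [isClosed_iff_clusterPt]
    intro w hw
    by_contra hwS
    apply hnoclus w
    rw [mapClusterPt_iff_frequently]
    intro U hU
    have hUS : (U ∩ S).Infinite := by
      intro hfin
      have hU' : U ∩ (U ∩ S)ᶜ ∈ 𝓝 w :=
        Filter.inter_mem hU
        (hfin.isClosed.isOpen_compl.mem_nhds (fun h => hwS h.2))
      obtain ⟨x, hx⟩ := clusterPt_principal_iff.mp hw _ hU'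
      exact hx.1.2 ⟨hx.1.1, hx.2⟩
    exact (hfreq _ hUS ((Set.inter_subset_right).trans hSsub)).mono fun n hn => hn.1
  -- split an infinite subset of range y into two disjoint infinite closed sets
  set v : ℕ → Y := fun n => (Set.Infinite.natEmbedding _ hrinf n : Y) with hvdef
  have hvinj : Function.Injective v :=
    fun a b h => (Set.Infinite.natEmbedding _ hrinf).injective (Subtype.ext h)
  have hvmem : ∀ n, v n ∈ Set.range y := fun n => (Set.Infinite.natEmbedding _ hrinf n).2
  set A : Set Y := v '' {n | Even n} with hAdef
  set B : Set Y := v '' {n | ¬ Even n} with hBdef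
  have hAsub : A ⊆ Set.range y := by rintro _ ⟨n, _, rfl⟩; exact hvmem n
  have hBsub : B ⊆ Set.range y := by rintro _ ⟨n, _, rfl⟩; exact hvmem n
  have hAinf : A.Infinite :=
    (Set.infinite_of_injective_forall_mem (f := fun n : ℕ => 2 * n)
      (fun a b h => by dsimp at h; omega) (fun n => by simp [parity_simps])).image (hvinj.injOn)
  have hBinf : B.Infinite :=
    (Set.infinite_of_injective_forall_mem (f := fun n : ℕ => 2 * n + 1)
      (fun a b h => by dsimp at h; omega) (fun n => by simp [parity_simps])).image
      (hvinj.injOn)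
  have hABdisj : Disjoint A B :=
    (Set.disjoint_image_iff hvinj).mpr (Set.disjoint_left.mpr fun n hn h2 => h2 hn)
  obtain ⟨f, hfA, hfB, hf01⟩ :=
    exists_continuous_zero_one_of_isClosed (hclosed A hAsub) (hclosed B hBsub) hABdisj
  set g : Y → (Set.Icc (0:ℝ) 1) := fun w => ⟨f w, hf01 w⟩ with hgdef
  have hg : Continuous g := f.continuous.subtype_mk _
  haveI : CompactSpace (Set.Icc (0:ℝ) 1) := isCompact_iff_compactSpace.mp isCompact_Icc
  set G : StoneCech Y → Set.Icc (0:ℝ) 1 := stoneCechExtend hg with hGdef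
  have hGι : ∀ w : Y, G (stoneCechUnit w) = g w := fun w =>
    congrFun (stoneCechExtend_extends hg) w
  have key : ∀ (S : Set Y), S.Infinite → S ⊆ Set.range y → (c : Set.Icc (0:ℝ) 1) →
      (∀ a ∈ S, g a = c) → G z = c := by
    intro S hSinf hSsub c hc
    have hfr : ∃ᶠ n in atTop, stoneCechUnit (y n) ∈ stoneCechUnit '' S :=
      (hfreq S hSinf hSsub).mono fun n hn => Set.mem_image_of_mem _ hn
    have hzS : z ∈ closure (stoneCechUnit '' S) :=
      mem_closure_of_frequently_of_tendsto hfr hyt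
    have hmaps : Set.MapsTo G (stoneCechUnit '' S) {c} := by
      rintro _ ⟨a, ha, rfl⟩
      rw [Set.mem_singleton_iff, hGι, hc a ha]
    have := map_mem_closure (continuous_stoneCechExtend hg) hzS hmaps
    rwa [closure_singleton, Set.mem_singleton_iff] at this
  have h0 : G z = ⟨0, by norm_num⟩ := key A hAinf hAsub _ (fun a ha => by
    ext; exact hfA ha)
  have h1 : G z = ⟨1, by norm_num⟩ := key B hBinf hBsub _ (fun a ha => by
    ext; exact hfB ha)
  rw [h0] at h1
  exact absurd (congrArg Subtype.val h1) (by norm_num)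
end

section
/- Let Y be an open subset of ℝ^q (q ∈ ℕ), F a nontrivial Hausdorff topological real vector space, f : Y → F a continuous function with f(y) ≠ 0 for all y ∈ Y, φ : Y → ℝ a function, y_0 ∈ Y, and v ∈ F. If the limit of φ(y)·f(y) as y → y_0 (within Y, along y ≠ y_0) exists and equals v, then there exists a ∈ ℝ such that φ(y) → a as y → y_0 (along y ≠ y_0), and a·f(y_0) = v. -/
open Set Filter Topology

theorem cancellation {q : ℕ} (hq : 0 < q) (Y : Set (Fin q → ℝ)) (hY : IsOpen Y)
    {F : Type*} [AddCommGroup F] [Module ℝ F] [TopologicalSpace F]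
    [IsTopologicalAddGroup F] [ContinuousSMul ℝ F] [T2Space F] [Nontrivial F]
    (f : Y → F) (hf : Continuous f) (hfz : ∀ y : Y, f y ≠ 0)
    (φ : Y → ℝ) (y₀ : Y) (v : F)
    (hlim : Filter.Tendsto (fun y => φ y • f y) (𝓝[≠] y₀) (𝓝 v)) :
    ∃ a : ℝ, Filter.Tendsto φ (𝓝[≠] y₀) (𝓝 a) ∧ a • f y₀ = v := by
  haveI : Nonempty (Fin q) := Fin.pos_iff_nonempty.mp hq
  -- the punctured neighborhood filter is nontrivial
  haveI hLne : (𝓝[≠] y₀).NeBot := by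
    have hbig : (𝓝[≠] ((y₀ : Fin q → ℝ))).NeBot := by
      exact Module.punctured_nhds_neBot ℝ (Fin q → ℝ) _
    have hcomap : 𝓝[≠] y₀ = Filter.comap (Subtype.val : Y → Fin q → ℝ)
        (𝓝[≠] ((y₀ : Fin q → ℝ))) := by
      rw [nhdsWithin, nhdsWithin, comap_inf, comap_principal,
        hY.isOpenEmbedding_subtypeVal.toIsInducing.nhds_eq_comap y₀]
      congr 1
      · congr 1
        ext y
        simp [Subtype.val_inj]
    rw [hcomap]
    exact hbig.comap_of_range_mem
      (by rw [Subtype.range_val]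
          exact mem_nhdsWithin_of_mem_nhds (hY.mem_nhds y₀.2))
  have hw : f y₀ ≠ 0 := hfz y₀
  have hfy : Tendsto f (𝓝[≠] y₀) (𝓝 (f y₀)) :=
    (hf.tendsto y₀).mono_left nhdsWithin_le_nhds
  -- uniqueness of the scalar
  have hinj : ∀ b c : ℝ, b • f y₀ = c • f y₀ → b = c := by
    intro b c h
    by_contra hne
    apply hw
    have h0 : (b - c) • f y₀ = 0 := by rw [sub_smul, h, sub_self]
    have hbc : b - c ≠ 0 := sub_ne_zero.mpr hne
    calc f y₀ = (b - c)⁻¹ • ((b - c) • f y₀) := by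
                rw [smul_smul, inv_mul_cancel₀ hbc, one_smul]
      _ = 0 := by rw [h0, smul_zero]
  -- the key ultrafilter argument
  have key : ∀ U : Ultrafilter Y, ↑U ≤ 𝓝[≠] y₀ →
      ∃ a : ℝ, Tendsto φ ↑U (𝓝 a) ∧ a • f y₀ = v := by
    intro U hU
    have hfU : Tendsto f ↑U (𝓝 (f y₀)) := hfy.mono_left hU
    have hsU : Tendsto (fun y => φ y • f y) ↑U (𝓝 v) := hlim.mono_left hU
    obtain ⟨ℓ, -, hℓ⟩ := isCompact_univ.ultrafilter_le_nhds
      (Ultrafilter.map (fun y => (φ y : EReal)) U) (by simp)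
    have hℓ' : Tendsto (fun y => (φ y : EReal)) ↑U (𝓝 ℓ) := hℓ
    -- in the infinite cases we get a contradiction
    have habs : Tendsto (fun y => |φ y|) ↑U atTop → False := by
      intro habs
      have h1 : Tendsto (fun y => (φ y)⁻¹) ↑U (𝓝 0) := by
        rw [tendsto_zero_iff_abs_tendsto_zero]
        simpa only [Function.comp_def, abs_inv] using tendsto_inv_atTop_zero.comp habs
      have h2 : Tendsto (fun y => (φ y)⁻¹ • (φ y • f y)) ↑U (𝓝 ((0 : ℝ) • v)) :=
        h1.smul hsU
      have h3 : ∀ᶠ y in ↑U, (φ y)⁻¹ • (φ y • f y) = f y := by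
        filter_upwards [habs.eventually_ge_atTop 1] with y hy
        have hne : φ y ≠ 0 := by
          intro h; rw [h, abs_zero] at hy; linarith
        rw [smul_smul, inv_mul_cancel₀ hne, one_smul]
      have h4 : Tendsto f ↑U (𝓝 0) := by
        simpa using (tendsto_congr' h3).mp h2
      exact hw (tendsto_nhds_unique hfU h4)
    induction ℓ using EReal.rec with
    | bot =>
      exact absurd (by
        have := EReal.tendsto_nhds_bot_iff_real.mp hℓ'
        have hb : Tendsto φ ↑U atBot := tendsto_atBot.mpr fun b =>
          (this b).mono fun y hy => le_of_lt (by exact_mod_cast hy)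
        exact (tendsto_abs_atBot_atTop.comp hb : _)) fun h => habs h
    | coe a =>
      have ha : Tendsto φ ↑U (𝓝 a) := EReal.tendsto_coe.mp hℓ'
      refine ⟨a, ha, ?_⟩
      exact tendsto_nhds_unique (ha.smul hfU) hsU
    | top =>
      exact absurd (by
        have := EReal.tendsto_nhds_top_iff_real.mp hℓ'
        have hb : Tendsto φ ↑U atTop := tendsto_atTop.mpr fun b =>
          (this b).mono fun y hy => le_of_lt (by exact_mod_cast hy)
        exact (tendsto_abs_atTop_atTop.comp hb : _)) fun h => habs h
  obtain ⟨U₀, hU₀⟩ := Filter.exists_ultrafilter_le (𝓝[≠] y₀)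
  obtain ⟨a, -, ha⟩ := key U₀ hU₀
  refine ⟨a, ?_, ha⟩
  rw [tendsto_iff_ultrafilter]
  intro U hU
  obtain ⟨b, hb, hbv⟩ := key U hU
  rwa [hinj b a (hbv.trans ha.symm)] at hb
end

section
/- Let Y be an open subset of ℝ^q (q ∈ ℕ), F a real normed space, and n ∈ ℕ ∪ {0}. Suppose f ∈ C^n(Y,F) satisfies f(y) ≠ 0 for all y ∈ Y, and φ : Y → ℝ is a function such that the product y ↦ φ(y)·f(y) belongs to C^n(Y,F). Then φ ∈ C^n(Y,ℝ). -/
open Set Filter Topology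

theorem product_rule_lemma {q : ℕ} (Y : Set (Fin q → ℝ)) (hY : IsOpen Y) (n : ℕ)
    {F : Type*} [NormedAddCommGroup F] [NormedSpace ℝ F]
    (f : (Fin q → ℝ) → F) (hf : ContDiffOn ℝ n f Y) (hfz : ∀ y ∈ Y, f y ≠ 0)
    (φ : (Fin q → ℝ) → ℝ) (hφf : ContDiffOn ℝ n (fun y => φ y • f y) Y) :
    ContDiffOn ℝ n φ Y := by
  intro y hy
  obtain ⟨L, hL1, hL2⟩ := exists_dual_vector ℝ (f y) (norm_ne_zero_iff.mpr (hfz y hy))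
  set U : Set (Fin q → ℝ) := Y ∩ (fun x => L (f x)) ⁻¹' {0}ᶜ with hUdef
  have hLc : ContinuousOn (fun x => L (f x)) Y :=
    L.continuous.comp_continuousOn hf.continuousOn
  have hU : IsOpen U := hLc.isOpen_inter_preimage hY isOpen_compl_singleton
  have hyU : y ∈ U := by
    refine ⟨hy, ?_⟩
    simp only [mem_preimage, mem_compl_iff, mem_singleton_iff, hL2]
    exact_mod_cast norm_ne_zero_iff.mpr (hfz y hy)
  have hUY : U ⊆ Y := inter_subset_left
  have hden : ∀ x ∈ U, L (f x) ≠ 0 := fun x hx => hx.2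
  have hnum : ContDiffOn ℝ n (fun x => L (φ x • f x)) U :=
    L.contDiff.comp_contDiffOn (hφf.mono hUY)
  have hdenc : ContDiffOn ℝ n (fun x => L (f x)) U :=
    L.contDiff.comp_contDiffOn (hf.mono hUY)
  have hdiv : ContDiffOn ℝ n (fun x => L (φ x • f x) / L (f x)) U :=
    hnum.div hdenc hden
  have hcongr : ContDiffOn ℝ n φ U := by
    refine hdiv.congr fun x hx => ?_
    rw [map_smul, smul_eq_mul, mul_div_assoc, div_self (hden x hx), mul_one]
  exact ContDiffWithinAt.mono_of_mem_nhdsWithin (hcongr y hyU) (mem_nhdsWithin_of_mem_nhds (hU.mem_nhds hyU))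
end

section
/- Let E be a real normed space, φ a C^∞-bump on ℝ^p, (u_n) a norm-bounded sequence in E, x_0 ∈ ℝ^p, and (x_n)_{n≥1} a sequence in ℝ^p with |x_{n+1} − x_0| < (1/3)|x_n − x_0| < 1 for all n. Set r_n = |x_n − x_0| and φ_n(x) = φ((x − x_n)/(r_n/2)). Let m ∈ ℕ and let (c_n) be a sequence of real numbers with c_n / r_n^m → 0. Then the function f : ℝ^p → E defined by f(x) = Σ_n c_n · φ_n(x) · u_n (at each point x at most one summand is nonzero, since the supports of the φ_n are pairwise disjoint closed balls around the x_n) belongs to C^m(ℝ^p, E). -/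
open Set Filter Topology

private lemma iteratedFDeriv_congr_nhds' {V W : Type*} [NormedAddCommGroup V] [NormedSpace ℝ V]
    [NormedAddCommGroup W] [NormedSpace ℝ W] {f g : V → W} {x : V}
    (h : f =ᶠ[𝓝 x] g) (k : ℕ) : iteratedFDeriv ℝ k f x = iteratedFDeriv ℝ k g x := by
  rw [← iteratedFDerivWithin_univ, ← iteratedFDerivWithin_univ]
  exact Filter.EventuallyEq.iteratedFDerivWithin_eq (by rw [nhdsWithin_univ]; exact h)
    h.self_of_nhds k

private lemma iFD_comp_sub' {V W : Type*} [NormedAddCommGroup V] [NormedSpace ℝ V]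
    [NormedAddCommGroup W] [NormedSpace ℝ W] {f : V → W}
    (hf : ContDiff ℝ ((⊤ : ℕ∞) : WithTop ℕ∞) f) (a : V) (k : ℕ) :
    iteratedFDeriv ℝ k (fun y => f (y - a)) = fun x => iteratedFDeriv ℝ k f (x - a) := by
  induction k with
  | zero => funext x; ext m; simp
  | succ k IH =>
    funext x
    have hdiff : Differentiable ℝ (iteratedFDeriv ℝ k f) :=
      hf.differentiable_iteratedFDeriv (by exact_mod_cast WithTop.coe_lt_top (k : ℕ))
    have ht : HasFDerivAt (fun y : V => y - a) (ContinuousLinearMap.id ℝ V) x := by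
      simpa using (hasFDerivAt_id x).sub_const a
    have h2 : HasFDerivAt (fun y => iteratedFDeriv ℝ k f (y - a))
        (fderiv ℝ (iteratedFDeriv ℝ k f) (x - a)) x := by
      have h2' := (hdiff (x - a)).hasFDerivAt.comp x ht
      simp only [ContinuousLinearMap.comp_id] at h2'
      exact h2'
    rw [iteratedFDeriv_succ_eq_comp_left, iteratedFDeriv_succ_eq_comp_left]
    simp only [Function.comp_apply]
    rw [IH, h2.fderiv]

private lemma summable_of_unique' {V : Type*} [AddCommGroup V] [TopologicalSpace V]
    [IsTopologicalAddGroup V] (f : ℕ → V) (h : ∀ i j, f i ≠ 0 → f j ≠ 0 → i = j) : Summable f := by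
  by_cases hz : ∀ i, f i = 0
  · exact summable_zero.congr fun i => (hz i).symm
  · push_neg at hz
    obtain ⟨i, hi⟩ := hz
    exact summable_of_ne_finset_zero (s := {i}) (fun j hj => by
      by_contra h0
      exact hj (by simp [h j i h0 hi]))

private lemma norm_tsum_le_of_unique' {V : Type*} [NormedAddCommGroup V]
    (f : ℕ → V) (h : ∀ i j, f i ≠ 0 → f j ≠ 0 → i = j) {C : ℝ} (hC : 0 ≤ C)
    (hb : ∀ i, f i ≠ 0 → ‖f i‖ ≤ C) : ‖∑' i, f i‖ ≤ C := by
  by_cases hz : ∀ i, f i = 0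
  · rw [tsum_eq_single 0 (fun j _ => hz j), hz 0]
    simpa
  · push_neg at hz
    obtain ⟨i, hi⟩ := hz
    rw [tsum_eq_single i (fun j hj => by
      by_contra h0
      exact hj (h j i h0 hi))]
    exact hb i hi

set_option maxHeartbeats 1000000 in
set_option synthInstance.maxHeartbeats 100000 in
theorem bump_sum_contDiff {p : ℕ} {E : Type*} [NormedAddCommGroup E] [NormedSpace ℝ E]
    (φ : EuclideanSpace ℝ (Fin p) → ℝ) (hφsmooth : ContDiff ℝ ((⊤ : ℕ∞) : WithTop ℕ∞) φ)
    (hφ01 : ∀ x, 0 ≤ φ x ∧ φ x ≤ 1)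
    (hφ1 : ∀ x, ‖x‖ ≤ 1 / 2 → φ x = 1) (hφ0 : ∀ x, 1 ≤ ‖x‖ → φ x = 0)
    (u : ℕ → E) (hu : ∃ C, ∀ n, ‖u n‖ ≤ C)
    (x₀ : EuclideanSpace ℝ (Fin p)) (xs : ℕ → EuclideanSpace ℝ (Fin p))
    (hxs : ∀ n, ‖xs (n + 1) - x₀‖ < (1 / 3) * ‖xs n - x₀‖ ∧ (1 / 3) * ‖xs n - x₀‖ < 1)
    (m : ℕ) (c : ℕ → ℝ)
    (hc : Filter.Tendsto (fun n => c n / ‖xs n - x₀‖ ^ m) Filter.atTop (𝓝 0)) :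
    ContDiff ℝ m (fun x : EuclideanSpace ℝ (Fin p) =>
      ∑' n, (c n * φ ((‖xs n - x₀‖ / 2)⁻¹ • (x - xs n))) • u n) := by
  classical
  obtain ⟨C₀, hC₀⟩ := hu
  have hC0 : 0 ≤ C₀ := le_trans (norm_nonneg _) (hC₀ 0)
  set r : ℕ → ℝ := fun n => ‖xs n - x₀‖ with hr
  have hrv : ∀ n, r n = ‖xs n - x₀‖ := fun n => by rw [hr]
  have hxs' : ∀ n, r (n + 1) < 1 / 3 * r n ∧ 1 / 3 * r n < 1 := by
    simp only [hr]; exact hxs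
  have hc' : Tendsto (fun n => c n / r n ^ m) atTop (𝓝 0) := by
    simp only [hr]; exact hc
  have hr_pos : ∀ n, 0 < r n := by
    intro n
    have h1 := (hxs' n).1
    have h2 : (0:ℝ) ≤ r (n + 1) := by rw [hrv]; exact norm_nonneg _
    nlinarith
  have hr_lt3 : ∀ n, r n < 3 := fun n => by have := (hxs' n).2; linarith
  have hr_step : ∀ n, r (n + 1) < r n / 3 := fun n => by have := (hxs' n).1; linarith
  have hr_anti : StrictAnti r := strictAnti_nat_of_succ_lt fun n =>
    lt_of_lt_of_le (hr_step n) (by have := hr_pos n; linarith)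
  have hr_le : ∀ n, r n ≤ r 0 * (1 / 3) ^ n := by
    intro n
    induction n with
    | zero => simp
    | succ k IH =>
      have h1 := hr_step k
      calc r (k + 1) ≤ r k / 3 := h1.le
        _ ≤ (r 0 * (1 / 3) ^ k) / 3 := by linarith
        _ = r 0 * (1 / 3) ^ (k + 1) := by ring
  have hr_to0 : Tendsto r atTop (𝓝 0) := by
    apply squeeze_zero (fun n => (hr_pos n).le) hr_le
    have := (tendsto_pow_atTop_nhds_zero_of_lt_one
      (by norm_num : (0:ℝ) ≤ 1 / 3) (by norm_num : (1:ℝ) / 3 < 1)).const_mul (r 0)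
    simpa using this
  set g : ℕ → EuclideanSpace ℝ (Fin p) → E :=
    fun n x => (c n * φ ((r n / 2)⁻¹ • (x - xs n))) • u n with hg
  have hkle : ∀ k : ℕ, (k : WithTop ℕ∞) ≤ ((⊤ : ℕ∞) : WithTop ℕ∞) := fun k => by
    exact_mod_cast le_top
  have hklt : ∀ k : ℕ, (k : WithTop ℕ∞) < ((⊤ : ℕ∞) : WithTop ℕ∞) := fun k => by
    exact_mod_cast WithTop.coe_lt_top k
  have hg_smooth : ∀ n, ContDiff ℝ ((⊤ : ℕ∞) : WithTop ℕ∞) (g n) := by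
    intro n
    rw [hg]
    exact (contDiff_const.mul (hφsmooth.comp
      ((contDiff_id.sub contDiff_const).const_smul _))).smul contDiff_const
  have hg_zero : ∀ n x, r n / 2 < ‖x - xs n‖ → g n x = 0 := by
    intro n x hx
    have h2 : 0 < r n / 2 := by have := hr_pos n; linarith
    have hφz : φ ((r n / 2)⁻¹ • (x - xs n)) = 0 := by
      apply hφ0
      have h3 : (r n / 2)⁻¹ * (r n / 2) ≤ (r n / 2)⁻¹ * ‖x - xs n‖ :=
        mul_le_mul_of_nonneg_left hx.le (inv_nonneg.mpr h2.le)
      rw [inv_mul_cancel₀ (ne_of_gt h2)] at h3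
      rw [norm_smul, Real.norm_eq_abs, abs_inv, abs_of_pos h2]
      exact h3
    simp only [hg]
    rw [hφz, mul_zero, zero_smul]
  have hiFD_zero : ∀ k n x, r n / 2 < ‖x - xs n‖ → iteratedFDeriv ℝ k (g n) x = 0 := by
    intro k n x hx
    have hopen : IsOpen {y : EuclideanSpace ℝ (Fin p) | r n / 2 < ‖y - xs n‖} :=
      isOpen_lt continuous_const ((continuous_id.sub continuous_const).norm)
    have hev : g n =ᶠ[𝓝 x] fun _ => 0 :=
      Filter.eventuallyEq_of_mem (hopen.mem_nhds hx) fun y hy => hg_zero n y hy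
    rw [iteratedFDeriv_congr_nhds' hev k, iteratedFDeriv_zero_fun]
    rfl
  have hloc : ∀ n x, ‖x - xs n‖ ≤ r n / 2 → r n / 2 ≤ ‖x - x₀‖ ∧ ‖x - x₀‖ ≤ 3 * r n / 2 := by
    intro n x hx
    have t1 := dist_triangle (xs n) x x₀
    have t2 := dist_triangle x (xs n) x₀
    simp only [dist_eq_norm] at t1 t2
    have e1 : ‖xs n - x‖ = ‖x - xs n‖ := norm_sub_rev _ _
    have hrn := hrv n
    constructor
    · linarith
    · linarith
  have hr_lt_of_lt : ∀ n j : ℕ, n < j → r j < r n / 3 := fun n j h =>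
    lt_of_le_of_lt (hr_anti.antitone h) (hr_step n)
  have huniq : ∀ x n j, ‖x - xs n‖ ≤ r n / 2 → ‖x - xs j‖ ≤ r j / 2 → n = j := by
    intro x n j hn hj
    by_contra hne
    rcases Nat.lt_or_ge n j with h | h
    · have l1 := (hloc n x hn).1
      have l2 := (hloc j x hj).2
      have l3 := hr_lt_of_lt n j h
      linarith
    · have h' : j < n := lt_of_le_of_ne h fun e => hne e.symm
      have l1 := (hloc j x hj).1
      have l2 := (hloc n x hn).2
      have l3 := hr_lt_of_lt j n h'
      linarith
  have hterm_supp : ∀ k n x, iteratedFDeriv ℝ k (g n) x ≠ 0 → ‖x - xs n‖ ≤ r n / 2 := by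
    intro k n x h
    by_contra h'
    exact h (hiFD_zero k n x (not_le.mp h'))
  have hterm_uniq : ∀ k (x : EuclideanSpace ℝ (Fin p)), ∀ i j,
      iteratedFDeriv ℝ k (g i) x ≠ 0 → iteratedFDeriv ℝ k (g j) x ≠ 0 → i = j :=
    fun k x i j hi hj => huniq x i j (hterm_supp k i x hi) (hterm_supp k j x hj)
  have hφcs : HasCompactSupport φ :=
    HasCompactSupport.intro (isCompact_closedBall (0 : EuclideanSpace ℝ (Fin p)) 1)
      (fun x hx => hφ0 x (by
        simp only [Metric.mem_closedBall, dist_zero_right, not_le] at hx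
        exact hx.le))
  have hMex : ∀ k : ℕ, ∃ Mk : ℝ, 0 ≤ Mk ∧ ∀ y, ‖iteratedFDeriv ℝ k φ y‖ ≤ Mk := by
    intro k
    obtain ⟨Mk, hMk⟩ :=
      (hφsmooth.continuous_iteratedFDeriv (hkle k)).bounded_above_of_compact_support
        (hφcs.iteratedFDeriv k)
    exact ⟨Mk, le_trans (norm_nonneg _) (hMk 0), hMk⟩
  choose M hM0 hMb using hMex
  have h2rnn : ∀ n, (0:ℝ) ≤ 2 / r n := fun n => div_nonneg (by norm_num) (hr_pos n).le
  have hbound : ∀ k n (x : EuclideanSpace ℝ (Fin p)),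
      ‖iteratedFDeriv ℝ k (g n) x‖ ≤ |c n| * ‖u n‖ * M k * (2 / r n) ^ k := by
    intro k n x
    have h2 : 0 < r n / 2 := by have := hr_pos n; linarith
    set L : EuclideanSpace ℝ (Fin p) →L[ℝ] EuclideanSpace ℝ (Fin p) :=
      (r n / 2)⁻¹ • ContinuousLinearMap.id ℝ (EuclideanSpace ℝ (Fin p)) with hL
    set A : ℝ →L[ℝ] E := c n • ContinuousLinearMap.toSpanSingleton ℝ (u n) with hA
    have hgn : g n = fun y => (⇑A ∘ (φ ∘ ⇑L)) (y - xs n) := by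
      funext y
      simp only [hg, hA, hL, Function.comp_apply, ContinuousLinearMap.coe_smul',
        Pi.smul_apply, ContinuousLinearMap.toSpanSingleton_apply,
        ContinuousLinearMap.coe_id', id_eq, smul_smul]
    have hφL : ContDiff ℝ ((⊤ : ℕ∞) : WithTop ℕ∞) (φ ∘ ⇑L) := hφsmooth.comp L.contDiff
    have hAφL : ContDiff ℝ ((⊤ : ℕ∞) : WithTop ℕ∞) (⇑A ∘ (φ ∘ ⇑L)) := A.contDiff.comp hφL
    rw [hgn, iFD_comp_sub' hAφL (xs n) k]
    show ‖iteratedFDeriv ℝ k (⇑A ∘ (φ ∘ ⇑L)) (x - xs n)‖ ≤ |c n| * ‖u n‖ * M k * (2 / r n) ^ k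
    rw [A.iteratedFDeriv_comp_left (hφL.contDiffAt (x := x - xs n)) (hkle k),
      L.iteratedFDeriv_comp_right hφsmooth (x - xs n) (hkle k)]
    have hAn : ‖A‖ ≤ |c n| * ‖u n‖ := by
      rw [hA]
      apply ContinuousLinearMap.opNorm_le_bound _ (by positivity) (fun t => ?_)
      simp only [ContinuousLinearMap.smul_apply, ContinuousLinearMap.toSpanSingleton_apply,
        norm_smul, Real.norm_eq_abs]
      exact le_of_eq (by ring)
    have hLn : ‖L‖ ≤ 2 / r n := by
      rw [hL]
      apply ContinuousLinearMap.opNorm_le_bound _ (h2rnn n) (fun v => ?_)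
      simp only [ContinuousLinearMap.smul_apply, ContinuousLinearMap.id_apply,
        norm_smul, Real.norm_eq_abs, abs_inv, abs_of_pos h2]
      rw [inv_div]
    calc ‖A.compContinuousMultilinearMap
          ((iteratedFDeriv ℝ k φ (L (x - xs n))).compContinuousLinearMap fun _ => L)‖
        ≤ ‖A‖ * ‖(iteratedFDeriv ℝ k φ (L (x - xs n))).compContinuousLinearMap fun _ => L‖ :=
          A.norm_compContinuousMultilinearMap_le _
      _ ≤ ‖A‖ * (‖iteratedFDeriv ℝ k φ (L (x - xs n))‖ * ∏ _i : Fin k, ‖L‖) :=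
          mul_le_mul_of_nonneg_left
            ((iteratedFDeriv ℝ k φ (L (x - xs n))).norm_compContinuousLinearMap_le _)
            (norm_nonneg _)
      _ ≤ (|c n| * ‖u n‖) * (M k * (2 / r n) ^ k) := by
          have hp : (∏ _i : Fin k, ‖L‖) = ‖L‖ ^ k := by
            rw [Finset.prod_const, Finset.card_univ, Fintype.card_fin]
          rw [hp]
          have h1 : ‖iteratedFDeriv ℝ k φ (L (x - xs n))‖ * ‖L‖ ^ k ≤ M k * (2 / r n) ^ k :=
            mul_le_mul (hMb k _) (pow_le_pow_left₀ (norm_nonneg _) hLn k)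
              (by positivity) (hM0 k)
          exact mul_le_mul hAn h1 (by positivity) (by positivity)
      _ = |c n| * ‖u n‖ * M k * (2 / r n) ^ k := by ring
  have hc_eps : ∀ ε : ℝ, 0 < ε → ∃ N, ∀ n, N ≤ n → |c n| ≤ ε * r n ^ m := by
    intro ε hε
    obtain ⟨N, hN⟩ := Metric.tendsto_atTop.mp hc' ε hε
    refine ⟨N, fun n hn => ?_⟩
    have h1 := hN n hn
    rw [Real.dist_eq, sub_zero, abs_div, abs_of_pos (pow_pos (hr_pos n) m)] at h1
    rw [div_lt_iff₀ (pow_pos (hr_pos n) m)] at h1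
    linarith
  have hx₀far : ∀ n, r n / 2 < ‖x₀ - xs n‖ := by
    intro n
    rw [norm_sub_rev, ← hrv n]
    have := hr_pos n
    linarith
  have hq0 : ∀ k, (∑' n, iteratedFDeriv ℝ k (g n) x₀) = 0 := by
    intro k
    have hz : ∀ n, iteratedFDeriv ℝ k (g n) x₀ = 0 := fun n => hiFD_zero k n x₀ (hx₀far n)
    simp [hz]
  have hlocalrep : ∀ x : EuclideanSpace ℝ (Fin p), x ≠ x₀ →
      ∃ N : ℕ, ∀ k : ℕ, ∀ y ∈ Metric.ball x (‖x - x₀‖ / 2),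
        (∑' n, iteratedFDeriv ℝ k (g n) y) =
          iteratedFDeriv ℝ k (fun z => ∑ i ∈ Finset.range N, g i z) y := by
    intro x hx
    have hδ : 0 < ‖x - x₀‖ := norm_pos_iff.mpr (sub_ne_zero.mpr hx)
    obtain ⟨N, hN⟩ := Metric.tendsto_atTop.mp hr_to0 (‖x - x₀‖ / 3) (by positivity)
    have hrN : ∀ n, N ≤ n → r n < ‖x - x₀‖ / 3 := by
      intro n hn
      have h1 := hN n hn
      rwa [Real.dist_eq, sub_zero, abs_of_pos (hr_pos n)] at h1
    refine ⟨N, fun k y hy => ?_⟩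
    have hyfar : ∀ n, N ≤ n → r n / 2 < ‖y - xs n‖ := by
      intro n hn
      by_contra hcon
      push_neg at hcon
      have l1 := (hloc n y hcon).2
      have l2 : ‖x - x₀‖ / 2 < ‖y - x₀‖ := by
        have t := dist_triangle x y x₀
        simp only [dist_eq_norm] at t
        have hyb : ‖x - y‖ < ‖x - x₀‖ / 2 := by
          rw [← dist_eq_norm, dist_comm]
          exact Metric.mem_ball.mp hy
        linarith
      have := hrN n hn
      linarith
    rw [iteratedFDeriv_sum (fun j _ => (hg_smooth j).of_le (hkle k)), Finset.sum_apply]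
    exact tsum_eq_sum fun n hn =>
      hiFD_zero k n y (hyfar n (le_of_not_gt fun hlt => hn (Finset.mem_range.mpr hlt)))
  have hfd_ne : ∀ k (x : EuclideanSpace ℝ (Fin p)), x ≠ x₀ →
      HasFDerivAt (fun y => ∑' n, iteratedFDeriv ℝ k (g n) y)
        ((∑' n, iteratedFDeriv ℝ (k + 1) (g n) x).curryLeft) x := by
    intro k x hx
    obtain ⟨N, hrep⟩ := hlocalrep x hx
    have hδ : 0 < ‖x - x₀‖ / 2 := by
      have : 0 < ‖x - x₀‖ := norm_pos_iff.mpr (sub_ne_zero.mpr hx)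
      linarith
    have hG : ContDiff ℝ ((⊤ : ℕ∞) : WithTop ℕ∞) (fun z => ∑ i ∈ Finset.range N, g i z) :=
      ContDiff.sum fun i _ => hg_smooth i
    have hTay := contDiff_iff_ftaylorSeries.mp hG
    have hFD := hTay.fderiv k (hklt k) x
    have hx_mem : x ∈ Metric.ball x (‖x - x₀‖ / 2) := Metric.mem_ball_self hδ
    have hev : (fun y => ∑' n, iteratedFDeriv ℝ k (g n) y) =ᶠ[𝓝 x]
        (fun y => iteratedFDeriv ℝ k (fun z => ∑ i ∈ Finset.range N, g i z) y) :=
      Filter.eventuallyEq_of_mem (Metric.isOpen_ball.mem_nhds hx_mem) fun y hy => hrep k y hy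
    have hval : (∑' n, iteratedFDeriv ℝ (k + 1) (g n) x) =
        iteratedFDeriv ℝ (k + 1) (fun z => ∑ i ∈ Finset.range N, g i z) x :=
      hrep (k + 1) x hx_mem
    rw [hval]
    exact hFD.congr_of_eventuallyEq hev
  have hcont_ne : ∀ k (x : EuclideanSpace ℝ (Fin p)), x ≠ x₀ →
      ContinuousAt (fun y => ∑' n, iteratedFDeriv ℝ k (g n) y) x := by
    intro k x hx
    obtain ⟨N, hrep⟩ := hlocalrep x hx
    have hδ : 0 < ‖x - x₀‖ / 2 := by
      have : 0 < ‖x - x₀‖ := norm_pos_iff.mpr (sub_ne_zero.mpr hx)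
      linarith
    have hG : ContDiff ℝ ((⊤ : ℕ∞) : WithTop ℕ∞) (fun z => ∑ i ∈ Finset.range N, g i z) :=
      ContDiff.sum fun i _ => hg_smooth i
    have hx_mem : x ∈ Metric.ball x (‖x - x₀‖ / 2) := Metric.mem_ball_self hδ
    have hev : (fun y => ∑' n, iteratedFDeriv ℝ k (g n) y) =ᶠ[𝓝 x]
        (fun y => iteratedFDeriv ℝ k (fun z => ∑ i ∈ Finset.range N, g i z) y) :=
      Filter.eventuallyEq_of_mem (Metric.isOpen_ball.mem_nhds hx_mem) fun y hy => hrep k y hy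
    exact ((hG.continuous_iteratedFDeriv (hkle k)).continuousAt).congr hev.symm
  have hcont_x₀ : ∀ k, k ≤ m → ContinuousAt (fun y => ∑' n, iteratedFDeriv ℝ k (g n) y) x₀ := by
    intro k hk
    show Tendsto (fun y => ∑' n, iteratedFDeriv ℝ k (g n) y) (𝓝 x₀)
      (𝓝 (∑' n, iteratedFDeriv ℝ k (g n) x₀))
    rw [hq0 k]
    rw [NormedAddCommGroup.tendsto_nhds_zero]
    intro ε hε
    have hKnn : 0 ≤ C₀ * M k * 2 ^ k * 3 ^ m :=
      mul_nonneg (mul_nonneg (mul_nonneg hC0 (hM0 k)) (by positivity)) (by positivity)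
    set K : ℝ := C₀ * M k * 2 ^ k * 3 ^ m + 1 with hK
    have hKpos : 0 < K := by rw [hK]; linarith
    obtain ⟨N, hN⟩ := hc_eps (ε / K) (by positivity)
    have hball : Metric.ball x₀ (r N / 2) ∈ 𝓝 x₀ :=
      Metric.ball_mem_nhds _ (by have := hr_pos N; linarith)
    filter_upwards [hball] with y hy
    have hbnd : ∀ n, iteratedFDeriv ℝ k (g n) y ≠ 0 →
        ‖iteratedFDeriv ℝ k (g n) y‖ ≤ ε * (C₀ * M k * 2 ^ k * 3 ^ m) / K := by
      intro n hne
      have hsup := hterm_supp k n y hne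
      have hl := (hloc n y hsup).1
      have hyx : ‖y - x₀‖ < r N / 2 := by
        have h1 := Metric.mem_ball.mp hy; rwa [dist_eq_norm] at h1
      have hnN : N ≤ n := by
        by_contra hcon
        push_neg at hcon
        have h1 : r N ≤ r n := hr_anti.antitone (le_of_lt hcon)
        linarith
      have hcb := hN n hnN
      have h0 : r n * (2 / r n) = 2 := by
        rw [mul_comm]; exact div_mul_cancel₀ 2 (ne_of_gt (hr_pos n))
      have hsplit : r n ^ m * (2 / r n) ^ k ≤ 3 ^ m * 2 ^ k := by
        have h1 : r n ^ m = r n ^ (m - k) * r n ^ k := by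
          rw [← pow_add, Nat.sub_add_cancel hk]
        have h2 : r n ^ k * (2 / r n) ^ k = 2 ^ k := by rw [← mul_pow, h0]
        have h4 : r n ^ (m - k) ≤ 3 ^ m :=
          le_trans (pow_le_pow_left₀ (hr_pos n).le (hr_lt3 n).le _)
            (pow_le_pow_right₀ (by norm_num) (Nat.sub_le m k))
        calc r n ^ m * (2 / r n) ^ k = r n ^ (m - k) * (r n ^ k * (2 / r n) ^ k) := by
              rw [h1]; ring
          _ = r n ^ (m - k) * 2 ^ k := by rw [h2]
          _ ≤ 3 ^ m * 2 ^ k :=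
              mul_le_mul_of_nonneg_right h4 (by positivity)
      calc ‖iteratedFDeriv ℝ k (g n) y‖ ≤ |c n| * ‖u n‖ * M k * (2 / r n) ^ k := hbound k n y
        _ ≤ (ε / K * r n ^ m) * C₀ * M k * (2 / r n) ^ k := by
            apply mul_le_mul_of_nonneg_right _ (pow_nonneg (h2rnn n) k)
            apply mul_le_mul_of_nonneg_right _ (hM0 k)
            exact mul_le_mul hcb (hC₀ n) (norm_nonneg _) (by positivity)
        _ = ε / K * (r n ^ m * (2 / r n) ^ k) * (C₀ * M k) := by ring
        _ ≤ ε / K * (3 ^ m * 2 ^ k) * (C₀ * M k) :=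
            mul_le_mul_of_nonneg_right
              (mul_le_mul_of_nonneg_left hsplit (by positivity))
              (mul_nonneg hC0 (hM0 k))
        _ = ε * (C₀ * M k * 2 ^ k * 3 ^ m) / K := by ring
    have hCnn : 0 ≤ ε * (C₀ * M k * 2 ^ k * 3 ^ m) / K :=
      div_nonneg (mul_nonneg hε.le hKnn) hKpos.le
    have hle : ‖∑' n, iteratedFDeriv ℝ k (g n) y‖ ≤ ε * (C₀ * M k * 2 ^ k * 3 ^ m) / K :=
      norm_tsum_le_of_unique' _ (hterm_uniq k y) hCnn hbnd
    have hlt : ε * (C₀ * M k * 2 ^ k * 3 ^ m) / K < ε := by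
      rw [div_lt_iff₀ hKpos, hK]
      nlinarith [hε]
    exact lt_of_le_of_lt hle hlt
  have hfd_x₀ : ∀ k, k < m →
      HasFDerivAt (fun y => ∑' n, iteratedFDeriv ℝ k (g n) y)
        ((∑' n, iteratedFDeriv ℝ (k + 1) (g n) x₀).curryLeft) x₀ := by
    intro k hk
    have hz : (∑' n, iteratedFDeriv ℝ (k + 1) (g n) x₀).curryLeft = 0 := by
      rw [hq0 (k + 1)]
      ext v w
      simp [ContinuousMultilinearMap.curryLeft_apply]
    rw [hz]
    rw [hasFDerivAt_iff_isLittleO_nhds_zero]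
    simp only [hq0 k, sub_zero, ContinuousLinearMap.zero_apply]
    rw [Asymptotics.isLittleO_iff]
    intro δ hδ
    have hKnn : 0 ≤ C₀ * M k * 2 ^ (k + 1) * 3 ^ m :=
      mul_nonneg (mul_nonneg (mul_nonneg hC0 (hM0 k)) (by positivity)) (by positivity)
    set K : ℝ := C₀ * M k * 2 ^ (k + 1) * 3 ^ m + 1 with hK
    have hKpos : 0 < K := by rw [hK]; linarith
    obtain ⟨N, hN⟩ := hc_eps (δ / K) (by positivity)
    have hball : Metric.ball (0 : EuclideanSpace ℝ (Fin p)) (r N / 2) ∈ 𝓝 (0 : EuclideanSpace ℝ (Fin p)) :=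
      Metric.ball_mem_nhds _ (by have := hr_pos N; linarith)
    filter_upwards [hball] with h hmem
    have hxy : x₀ + h - x₀ = h := by abel
    apply norm_tsum_le_of_unique' _ (hterm_uniq k (x₀ + h)) (by positivity)
    intro n hne
    have hsup := hterm_supp k n (x₀ + h) hne
    have hl1 : r n / 2 ≤ ‖h‖ := by
      have := (hloc n (x₀ + h) hsup).1
      rwa [hxy] at this
    have hyx : ‖h‖ < r N / 2 := by
      have h1 := Metric.mem_ball.mp hmem
      rwa [dist_zero_right] at h1
    have hnN : N ≤ n := by
      by_contra hcon
      push_neg at hcon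
      have h1 : r N ≤ r n := hr_anti.antitone (le_of_lt hcon)
      linarith
    have hcb := hN n hnN
    have h0 : r n * (2 / r n) = 2 := by
      rw [mul_comm]; exact div_mul_cancel₀ 2 (ne_of_gt (hr_pos n))
    have hsplit : r n ^ m * (2 / r n) ^ k ≤ 3 ^ m * 2 ^ k * r n := by
      have h1 : r n ^ m = r n ^ (m - k) * r n ^ k := by
        rw [← pow_add, Nat.sub_add_cancel hk.le]
      have h2 : r n ^ k * (2 / r n) ^ k = 2 ^ k := by rw [← mul_pow, h0]
      have h3 : r n ^ (m - k) = r n ^ (m - k - 1) * r n := by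
        conv_lhs => rw [show m - k = (m - k - 1) + 1 by omega]
        rw [pow_succ]
      have h4 : r n ^ (m - k - 1) ≤ 3 ^ m :=
        le_trans (pow_le_pow_left₀ (hr_pos n).le (hr_lt3 n).le _)
          (pow_le_pow_right₀ (by norm_num) (by omega))
      calc r n ^ m * (2 / r n) ^ k
          = (r n ^ (m - k - 1) * r n) * (r n ^ k * (2 / r n) ^ k) := by rw [h1, h3]; ring
        _ = r n ^ (m - k - 1) * r n * 2 ^ k := by rw [h2]
        _ ≤ 3 ^ m * r n * 2 ^ k := by
            have h5 := (hr_pos n).le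
            exact mul_le_mul_of_nonneg_right
              (mul_le_mul_of_nonneg_right h4 h5) (by positivity)
        _ = 3 ^ m * 2 ^ k * r n := by ring
    calc ‖iteratedFDeriv ℝ k (g n) (x₀ + h)‖
        ≤ |c n| * ‖u n‖ * M k * (2 / r n) ^ k := hbound k n (x₀ + h)
      _ ≤ (δ / K * r n ^ m) * C₀ * M k * (2 / r n) ^ k := by
          apply mul_le_mul_of_nonneg_right _ (pow_nonneg (h2rnn n) k)
          apply mul_le_mul_of_nonneg_right _ (hM0 k)
          exact mul_le_mul hcb (hC₀ n) (norm_nonneg _) (by positivity)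
      _ = δ / K * (r n ^ m * (2 / r n) ^ k) * (C₀ * M k) := by ring
      _ ≤ δ / K * (3 ^ m * 2 ^ k * r n) * (C₀ * M k) :=
          mul_le_mul_of_nonneg_right
            (mul_le_mul_of_nonneg_left hsplit (by positivity))
            (mul_nonneg hC0 (hM0 k))
      _ ≤ δ / K * (3 ^ m * 2 ^ k * (2 * ‖h‖)) * (C₀ * M k) := by
          have h5 : r n ≤ 2 * ‖h‖ := by linarith
          exact mul_le_mul_of_nonneg_right
            (mul_le_mul_of_nonneg_left
              (mul_le_mul_of_nonneg_left h5 (by positivity)) (by positivity))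
            (mul_nonneg hC0 (hM0 k))
      _ = (C₀ * M k * 2 ^ (k + 1) * 3 ^ m) / K * (δ * ‖h‖) := by
          rw [pow_succ]; ring
      _ ≤ 1 * (δ * ‖h‖) := by
          apply mul_le_mul_of_nonneg_right _ (by positivity)
          rw [div_le_one hKpos, hK]; linarith
      _ = δ * ‖h‖ := one_mul _
  have hzero_eq : ∀ x : EuclideanSpace ℝ (Fin p),
      (∑' n, iteratedFDeriv ℝ 0 (g n) x).curry0 = ∑' n, g n x := by
    intro x
    by_cases hz : ∀ n, g n x = 0
    · have hz' : ∀ n, iteratedFDeriv ℝ 0 (g n) x = 0 := by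
        intro n; ext w; simp [hz n]
      rw [tsum_eq_single 0 (fun j _ => hz' j), tsum_eq_single 0 (fun j _ => hz j), hz' 0, hz 0]
      simp [ContinuousMultilinearMap.curry0]
    · push_neg at hz
      obtain ⟨i, hi⟩ := hz
      have happ : ∀ j, g j x = (iteratedFDeriv ℝ 0 (g j) x) 0 := fun j => rfl
      have hineq : iteratedFDeriv ℝ 0 (g i) x ≠ 0 := by
        intro e
        apply hi
        rw [happ i, e]
        rfl
      have hiFD : ∀ j, j ≠ i → iteratedFDeriv ℝ 0 (g j) x = 0 := by
        intro j hj
        by_contra h0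
        exact hj (hterm_uniq 0 x j i h0 hineq)
      rw [tsum_eq_single i hiFD, tsum_eq_single i (fun j hj => by
        rw [happ j, hiFD j hj]; rfl)]
      simp [ContinuousMultilinearMap.curry0]
  suffices hmain : ContDiff ℝ ((m : ℕ∞) : WithTop ℕ∞) (fun x => ∑' n, g n x) by
    have h2 := hmain
    simp only [hg, hr] at h2
    exact_mod_cast h2
  refine HasFTaylorSeriesUpTo.contDiff (n := (m : ℕ∞))
    (f' := fun x k => ∑' n, iteratedFDeriv ℝ k (g n) x) ?_
  constructor
  · exact hzero_eq
  · intro k hk x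
    have hk' : k < m := by exact_mod_cast hk
    by_cases hx : x = x₀
    · subst hx
      exact hfd_x₀ k hk'
    · exact hfd_ne k x hx
  · intro k hk
    have hk' : k ≤ m := by exact_mod_cast hk
    rw [continuous_iff_continuousAt]
    intro x
    by_cases hx : x = x₀
    · subst hx
      exact hcont_x₀ k hk'
    · exact hcont_ne k x hx
end

section
/- Let X be an open subset of ℝ^p (p ∈ ℕ), m ∈ ℕ ∪ {∞}, and let E and F be real Banach spaces. Suppose Φ : X × E → F is such that Tf(x) := Φ(x, f(x)) defines a linear operator T from C^m(X,E) into C^m(X,F) (i.e., x ↦ Φ(x, f(x)) belongs to C^m(X,F) for every f ∈ C^m(X,E), and T(af + bg) = aTf + bTg for all f, g ∈ C^m(X,E) and a, b ∈ ℝ). Then for every compact set K ⊆ X, the set of points x ∈ K at which the linear map u ↦ Φ(x,u) from E to F is not continuous is countable. -/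
open Set Filter Topology
open scoped ContDiff
-- translation lemma
theorem itfd_shift {G H : Type*} [NormedAddCommGroup G] [NormedSpace ℝ G]
    [NormedAddCommGroup H] [NormedSpace ℝ H]
    (f : G → H) (hf : ContDiff ℝ ∞ f) (b : G) (k : ℕ) (x : G) :
    iteratedFDeriv ℝ k (fun y => f (y + b)) x = iteratedFDeriv ℝ k f (x + b) := by
  induction k generalizing x with
  | zero => ext m; simp
  | succ k ih =>
    have hfun : iteratedFDeriv ℝ k (fun y => f (y + b)) =
        fun y => iteratedFDeriv ℝ k f (y + b) := funext fun y => ih y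
    have hdiff : ∀ z : G, HasFDerivAt (fun y => iteratedFDeriv ℝ k f (y + b))
        (fderiv ℝ (iteratedFDeriv ℝ k f) (z + b)) z := by
      intro z
      have h1 : HasFDerivAt (iteratedFDeriv ℝ k f)
          (fderiv ℝ (iteratedFDeriv ℝ k f) (z + b)) (z + b) :=
        ((hf.differentiable_iteratedFDeriv (by exact_mod_cast ENat.coe_lt_top k)).differentiableAt).hasFDerivAt
      have h2 : HasFDerivAt (fun y : G => y + b) (ContinuousLinearMap.id ℝ G) z :=
        (hasFDerivAt_id z).add_const b
      have h3 := h1.comp z h2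
      rw [ContinuousLinearMap.comp_id] at h3
      exact h3
    rw [iteratedFDeriv_succ_eq_comp_left, iteratedFDeriv_succ_eq_comp_left]
    simp only [Function.comp_apply, hfun]
    rw [(hdiff x).fderiv]

set_option maxHeartbeats 1000000 in
theorem bump_bound {G : Type*} [NormedAddCommGroup G] [NormedSpace ℝ G]
    {E : Type*} [NormedAddCommGroup E] [NormedSpace ℝ E]
    (ψ : G → ℝ) (hψ : ContDiff ℝ ∞ ψ) (Ck : ℝ) (k : ℕ)
    (hCk : ∀ z, ‖iteratedFDeriv ℝ k ψ z‖ ≤ Ck)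
    (c : ℝ) (hc : 0 < c) (a : G) (v : E) (x : G) :
    ‖iteratedFDeriv ℝ k (fun y => ψ (c • (y - a)) • v) x‖ ≤ Ck * c ^ k * ‖v‖ := by
  set L : G →L[ℝ] G := c • ContinuousLinearMap.id ℝ G with hL
  have hLapp : ∀ y, L y = c • y := fun y => by simp [hL]
  have hLnorm : ‖L‖ ≤ c := by
    refine ContinuousLinearMap.opNorm_le_bound L hc.le fun y => ?_
    rw [hLapp, norm_smul, Real.norm_eq_abs, abs_of_pos hc]
  have hg : ContDiff ℝ ∞ (ψ ∘ ⇑L) := hψ.comp L.contDiff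
  have hgb : ∀ z, ‖iteratedFDeriv ℝ k (ψ ∘ ⇑L) z‖ ≤ Ck * c ^ k := by
    intro z
    rw [ContinuousLinearMap.iteratedFDeriv_comp_right L hψ z (by exact_mod_cast le_top)]
    calc ‖(iteratedFDeriv ℝ k ψ (L z)).compContinuousLinearMap fun _ => L‖
        ≤ ‖iteratedFDeriv ℝ k ψ (L z)‖ * ∏ _i : Fin k, ‖L‖ :=
          ContinuousMultilinearMap.norm_compContinuousLinearMap_le _ _
      _ ≤ Ck * c ^ k := by
          rw [Finset.prod_const, Finset.card_univ, Fintype.card_fin]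
          exact mul_le_mul (hCk _) (pow_le_pow_left₀ (norm_nonneg L) hLnorm k)
            (pow_nonneg (norm_nonneg _) k) ((norm_nonneg _).trans (hCk (L z)))
  have key : (fun y => ψ (c • (y - a)) • v)
      = (ContinuousLinearMap.toSpanSingleton ℝ v) ∘ (fun y => (ψ ∘ ⇑L) (y + (-a))) := by
    funext y
    simp [ContinuousLinearMap.toSpanSingleton_apply, hLapp, sub_eq_add_neg]
  have hshift : ContDiff ℝ ∞ (fun y => (ψ ∘ ⇑L) (y + (-a))) :=
    hg.comp ((contDiff_id).add contDiff_const)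
  rw [key, ContinuousLinearMap.iteratedFDeriv_comp_left _ (hshift.contDiffAt (x := x)) (by exact_mod_cast le_top)]
  calc ‖(ContinuousLinearMap.toSpanSingleton ℝ v).compContinuousMultilinearMap
        (iteratedFDeriv ℝ k (fun y => (ψ ∘ ⇑L) (y + (-a))) x)‖
      ≤ ‖ContinuousLinearMap.toSpanSingleton ℝ v‖ *
        ‖iteratedFDeriv ℝ k (fun y => (ψ ∘ ⇑L) (y + (-a))) x‖ :=
        ContinuousLinearMap.norm_compContinuousMultilinearMap_le _ _
    _ ≤ ‖v‖ * (Ck * c ^ k) := by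
        rw [ContinuousLinearMap.norm_toSpanSingleton, itfd_shift _ hg]
        exact mul_le_mul_of_nonneg_left (hgb _) (norm_nonneg v)
    _ = Ck * c ^ k * ‖v‖ := by ring

theorem exists_interpolant {p : ℕ} {E : Type*} [NormedAddCommGroup E] [NormedSpace ℝ E]
    [CompleteSpace E] (y : ℕ → (Fin p → ℝ)) (r : ℕ → ℝ) (hr : ∀ n, 0 < r n)
    (hsep : ∀ n j, n ≠ j → r n ≤ dist (y j) (y n)) :
    ∃ δ : ℕ → ℝ, (∀ n, 0 < δ n) ∧ ∀ v : ℕ → E, (∀ n, ‖v n‖ ≤ δ n) →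
      ∃ f : (Fin p → ℝ) → E, ContDiff ℝ ∞ f ∧ ∀ j, f (y j) = v j := by
  set ψ : ContDiffBump (0 : Fin p → ℝ) := ⟨1, 2, one_pos, one_lt_two⟩ with hψdef
  have hCex : ∀ k : ℕ, ∃ Ck : ℝ, ∀ z, ‖iteratedFDeriv ℝ k (⇑ψ) z‖ ≤ Ck := fun k =>
    ((ψ.contDiff (n := ⊤)).continuous_iteratedFDeriv (by exact_mod_cast le_top)).bounded_above_of_compact_support
      (ψ.hasCompactSupport.iteratedFDeriv k)
  choose C hC using hCex
  have hC0 : ∀ k, 0 ≤ C k := fun k => le_trans (norm_nonneg _) (hC k 0)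
  set c : ℕ → ℝ := fun n => 2 / r n with hcdef
  have hc : ∀ n, 0 < c n := fun n => div_pos two_pos (hr n)
  set P : ℕ → ℝ := fun n => ∏ k ∈ Finset.range (n + 1), (1 + C k * c n ^ k) with hPdef
  have hPfac : ∀ n k, (1 : ℝ) ≤ 1 + C k * c n ^ k := fun n k => by
    nlinarith [mul_nonneg (hC0 k) (pow_nonneg (hc n).le k)]
  have hP1 : ∀ n, (1 : ℝ) ≤ P n := fun n => by
    show (1 : ℝ) ≤ ∏ k ∈ Finset.range (n + 1), (1 + C k * c n ^ k)
    calc (1 : ℝ) = ∏ _k ∈ Finset.range (n + 1), (1 : ℝ) := by simp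
      _ ≤ ∏ k ∈ Finset.range (n + 1), (1 + C k * c n ^ k) :=
        Finset.prod_le_prod (fun i _ => zero_le_one) (fun i _ => hPfac n i)
  have hPge : ∀ n k, k ≤ n → C k * c n ^ k ≤ P n := by
    intro n k hk
    calc C k * c n ^ k ≤ 1 + C k * c n ^ k := by linarith
    _ ≤ P n := by
        show (1 + C k * c n ^ k : ℝ) ≤ ∏ j ∈ Finset.range (n + 1), (1 + C j * c n ^ j)
        have hmem : k ∈ Finset.range (n + 1) := Finset.mem_range.2 (Nat.lt_succ_of_le hk)
        calc (1 + C k * c n ^ k : ℝ)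
            = ∏ j ∈ Finset.range (n + 1),
              (if j = k then (1 + C j * c n ^ j) else 1) := by
              rw [Finset.prod_ite_eq' (Finset.range (n + 1)) k
                (fun j => (1 + C j * c n ^ j : ℝ)), if_pos hmem]
          _ ≤ ∏ j ∈ Finset.range (n + 1), (1 + C j * c n ^ j) := by
              refine Finset.prod_le_prod (fun i _ => ?_) (fun i _ => ?_)
              · split
                · exact le_trans zero_le_one (hPfac n i)
                · exact zero_le_one
              · split
                · exact le_refl _
                · exact hPfac n i
  set δ : ℕ → ℝ := fun n => (2⁻¹ : ℝ) ^ n / P n with hδdef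
  have hδ0 : ∀ n, 0 < δ n := fun n => div_pos (by positivity) ((zero_lt_one).trans_le (hP1 n))
  refine ⟨δ, hδ0, fun v hv => ?_⟩
  -- the key bound
  have hbnd : ∀ (k n : ℕ) (x : Fin p → ℝ),
      ‖iteratedFDeriv ℝ k (fun x => ψ (c n • (x - y n)) • v n) x‖ ≤ C k * c n ^ k * δ n := by
    intro k n x
    calc ‖iteratedFDeriv ℝ k (fun x => ψ (c n • (x - y n)) • v n) x‖
        ≤ C k * c n ^ k * ‖v n‖ :=
          bump_bound (⇑ψ) ψ.contDiff (C k) k (hC k) (c n) (hc n) (y n) (v n) x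
      _ ≤ C k * c n ^ k * δ n := by
          exact mul_le_mul_of_nonneg_left (hv n)
            (mul_nonneg (hC0 k) (pow_nonneg (hc n).le k))
  have hkey : ∀ (k m : ℕ), k ≤ m → C k * c m ^ k * δ m ≤ (2⁻¹ : ℝ) ^ m := by
    intro k m hk
    have hPm : 0 < P m := zero_lt_one.trans_le (hP1 m)
    rw [hδdef]
    calc C k * c m ^ k * ((2⁻¹ : ℝ) ^ m / P m)
        = (C k * c m ^ k / P m) * (2⁻¹ : ℝ) ^ m := by ring
      _ ≤ 1 * (2⁻¹ : ℝ) ^ m := by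
          apply mul_le_mul_of_nonneg_right _ (by positivity)
          rw [div_le_one hPm]
          exact hPge m k hk
      _ = (2⁻¹ : ℝ) ^ m := one_mul _
  have hsummable : ∀ k : ℕ, Summable (fun n => C k * c n ^ k * δ n) := by
    intro k
    rw [← summable_nat_add_iff k]
    apply Summable.of_nonneg_of_le
      (fun n => mul_nonneg (mul_nonneg (hC0 k) (pow_nonneg (hc _).le k)) (hδ0 _).le)
      (fun n => hkey k (n + k) (Nat.le_add_left k n))
    exact (summable_geometric_of_lt_one (by norm_num) (by norm_num)).comp_injective
      (add_left_injective k)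
  refine ⟨fun x => ∑' n, ψ (c n • (x - y n)) • v n, ?_, ?_⟩
  · apply contDiff_tsum (v := fun k n => C k * c n ^ k * δ n)
    · intro n
      exact ((ψ.contDiff.comp ((contDiff_id.sub contDiff_const).const_smul (c n))).smul
        contDiff_const)
    · intro k _
      exact hsummable k
    · intro k n x _
      exact hbnd k n x
  · intro j
    have hzero : ∀ n, n ≠ j → ψ (c n • (y j - y n)) • v n = 0 := by
      intro n hn
      have hrle : r n ≤ ‖y j - y n‖ := by
        rw [← dist_eq_norm]
        exact hsep n j hn
      have hz : ψ.rOut ≤ dist (c n • (y j - y n)) 0 := by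
        rw [dist_zero_right, norm_smul, Real.norm_eq_abs, abs_of_pos (hc n)]
        calc (ψ.rOut : ℝ) = 2 := rfl
          _ = (2 / r n) * r n := by rw [div_mul_cancel₀]; exact (hr n).ne'
          _ ≤ c n * ‖y j - y n‖ := mul_le_mul (le_refl (c n)) hrle (hr n).le (hc n).le
      rw [ψ.zero_of_le_dist hz, zero_smul]
    show (∑' n, ψ (c n • (y j - y n)) • v n) = v j
    rw [tsum_eq_single j hzero]
    have h0 : c j • (y j - y j) = (0 : Fin p → ℝ) := by simp
    rw [h0, ψ.one_of_mem_closedBall, one_smul]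
    simp [hψdef] 


theorem continuous_off_countable {p : ℕ} {E F : Type*}
    [NormedAddCommGroup E] [NormedSpace ℝ E] [CompleteSpace E]
    [NormedAddCommGroup F] [NormedSpace ℝ F] [CompleteSpace F]
    (X : Set (Fin p → ℝ)) (hX : IsOpen X) (m : ℕ∞)
    (Φ : (Fin p → ℝ) → E → F)
    (hmaps : ∀ f : (Fin p → ℝ) → E, ContDiffOn ℝ m f X →
      ContDiffOn ℝ m (fun x => Φ x (f x)) X)
    (hlin : ∀ f g : (Fin p → ℝ) → E, ContDiffOn ℝ m f X → ContDiffOn ℝ m g X →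
      ∀ a b : ℝ, ∀ x ∈ X, Φ x (a • f x + b • g x) = a • Φ x (f x) + b • Φ x (g x))
    (K : Set (Fin p → ℝ)) (hK : K ⊆ X) (hKc : IsCompact K) :
    Set.Countable {x ∈ K | ¬ Continuous (Φ x)} := by
  set D := {x ∈ K | ¬ Continuous (Φ x)} with hDdef
  rcases Set.finite_or_infinite D with hfin | hinf
  · exact hfin.countable
  exfalso
  have hΦsmul : ∀ x ∈ X, ∀ (a : ℝ) (u : E), Φ x (a • u) = a • Φ x u := by
    intro x hx a u
    have h := hlin (fun _ => u) (fun _ => u) contDiffOn_const contDiffOn_const a 0 x hx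
    simpa using h
  have hΦadd : ∀ x ∈ X, ∀ u w : E, Φ x (u + w) = Φ x u + Φ x w := by
    intro x hx u w
    have h := hlin (fun _ => u) (fun _ => w) contDiffOn_const contDiffOn_const 1 1 x hx
    simpa using h
  have hΦ0 : ∀ x ∈ X, Φ x 0 = 0 := by
    intro x hx
    have h := hΦsmul x hx 0 0
    simpa using h
  -- unboundedness of discontinuous linear maps
  have hub : ∀ x ∈ X, ¬ Continuous (Φ x) → ∀ δ : ℝ, 0 < δ → ∀ n : ℕ,
      ∃ v : E, ‖v‖ ≤ δ ∧ (n : ℝ) < ‖Φ x v‖ := by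
    intro x hx hnc δ hδ n
    by_contra hcon
    push_neg at hcon
    apply hnc
    let L : E →ₗ[ℝ] F :=
      { toFun := Φ x
        map_add' := hΦadd x hx
        map_smul' := fun a u => hΦsmul x hx a u }
    have hbound : ∀ u : E, ‖L u‖ ≤ ((n : ℝ) / δ) * ‖u‖ := by
      intro u
      rcases eq_or_ne u 0 with rfl | hu
      · simp [L, hΦ0 x hx]
      · have hun : 0 < ‖u‖ := norm_pos_iff.2 hu
        have ht : 0 < δ / ‖u‖ := div_pos hδ hun
        have hle : ‖(δ / ‖u‖) • u‖ ≤ δ := by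
          rw [norm_smul, Real.norm_eq_abs, abs_of_pos ht, div_mul_cancel₀ _ hun.ne']
        have h2 := hcon ((δ / ‖u‖) • u) hle
        rw [hΦsmul x hx, norm_smul, Real.norm_eq_abs, abs_of_pos ht] at h2
        show ‖Φ x u‖ ≤ ((n : ℝ) / δ) * ‖u‖
        rw [div_mul_eq_mul_div, le_div_iff₀ hδ]
        calc ‖Φ x u‖ * δ = (δ / ‖u‖ * ‖Φ x u‖) * ‖u‖ := by field_simp
          _ ≤ (n : ℝ) * ‖u‖ := mul_le_mul_of_nonneg_right h2 hun.le
    exact AddMonoidHomClass.continuous_of_bound L ((n : ℝ) / δ) hbound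
  -- accumulation point of D
  obtain ⟨xq, hxqK, hacc⟩ := hinf.exists_accPt_of_subset_isCompact hKc
    (fun x hx => hx.1)
  have hxqX : xq ∈ X := hK hxqK
  have hnear : ∀ ε : ℝ, 0 < ε → ∃ z, z ∈ D ∧ z ≠ xq ∧ dist z xq < ε := by
    intro ε hε
    obtain ⟨z, hz, hne⟩ := accPt_iff_nhds.1 hacc (Metric.ball xq ε)
      (Metric.ball_mem_nhds _ hε)
    exact ⟨z, hz.2, hne, by simpa [Metric.mem_ball] using hz.1⟩
  have step : ∀ w : {z : Fin p → ℝ // z ∈ D ∧ z ≠ xq},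
      ∃ z : {z : Fin p → ℝ // z ∈ D ∧ z ≠ xq}, dist z.1 xq < dist w.1 xq / 4 := by
    intro w
    have hd : 0 < dist w.1 xq := dist_pos.2 w.2.2
    obtain ⟨z, hzD, hzne, hzd⟩ := hnear (dist w.1 xq / 4) (by linarith)
    exact ⟨⟨z, hzD, hzne⟩, hzd⟩
  choose next hnext using step
  obtain ⟨z0, hz0D, hz0ne, _⟩ := hnear 1 one_pos
  set Y : ℕ → {z : Fin p → ℝ // z ∈ D ∧ z ≠ xq} :=
    fun n => next^[n] ⟨z0, hz0D, hz0ne⟩ with hYdef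
  set y : ℕ → (Fin p → ℝ) := fun n => (Y n).1 with hydef
  set d : ℕ → ℝ := fun n => dist (y n) xq with hddef
  have hd0 : ∀ n, 0 < d n := fun n => dist_pos.2 (Y n).2.2
  have hstep : ∀ n, d (n + 1) < d n / 4 := by
    intro n
    have hY : Y (n + 1) = next (Y n) := Function.iterate_succ_apply' next n _
    have := hnext (Y n)
    simpa [hddef, hydef, hY] using this
  have hdec : Antitone d := antitone_nat_of_succ_le fun n =>
    le_trans (hstep n).le (by linarith [hd0 n])
  have hlt : ∀ i j, i < j → d j < d i / 4 := fun i j hij =>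
    lt_of_le_of_lt (hdec hij) (hstep i)
  have hsep : ∀ n j, n ≠ j → d n / 4 ≤ dist (y j) (y n) := by
    intro n j hnj
    rcases lt_or_gt_of_ne hnj with h | h
    · have h1 : d j < d n / 4 := hlt n j h
      have h2 : d n ≤ dist (y n) (y j) + d j := dist_triangle (y n) (y j) xq
      rw [dist_comm (y j) (y n)]
      linarith [hd0 n]
    · have h1 : d n < d j / 4 := hlt j n h
      have h2 : d j ≤ dist (y j) (y n) + d n := dist_triangle (y j) (y n) xq
      linarith [hd0 n]
  obtain ⟨δ, hδ0, hmain⟩ := exists_interpolant (E := E) y (fun n => d n / 4)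
    (fun n => by linarith [hd0 n]) hsep
  have hYmem : ∀ n, y n ∈ K ∧ ¬ Continuous (Φ (y n)) := fun n => (Y n).2.1
  have hvex : ∀ n : ℕ, ∃ v : E, ‖v‖ ≤ δ n ∧ (n : ℝ) < ‖Φ (y n) v‖ := fun n =>
    hub (y n) (hK (hYmem n).1) (hYmem n).2 (δ n) (hδ0 n) n
  choose v hv1 hv2 using hvex
  obtain ⟨f, hf, hfy⟩ := hmain v hv1
  have hfX : ContDiffOn ℝ m f X := (hf.of_le (by exact_mod_cast le_top)).contDiffOn
  have hgc : ContinuousOn (fun x => Φ x (f x)) X := (hmaps f hfX).continuousOn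
  have hdle : ∀ n, d n ≤ (4⁻¹ : ℝ) ^ n * d 0 := by
    intro n
    induction n with
    | zero => simp
    | succ k ih =>
      have := hstep k
      have h4 : (4⁻¹ : ℝ) ^ (k + 1) * d 0 = ((4⁻¹ : ℝ) ^ k * d 0) / 4 := by ring
      rw [h4]
      linarith
  have hy_tendsto : Tendsto y atTop (𝓝 xq) := by
    rw [tendsto_iff_dist_tendsto_zero]
    apply squeeze_zero (fun n => dist_nonneg) hdle
    have := (tendsto_pow_atTop_nhds_zero_of_lt_one (by norm_num : (0:ℝ) ≤ 4⁻¹)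
      (by norm_num : (4⁻¹ : ℝ) < 1)).mul_const (d 0)
    simpa using this
  have h1 : Tendsto (fun n => Φ (y n) (f (y n))) atTop (𝓝 (Φ xq (f xq))) := by
    refine Tendsto.comp (hgc xq hxqX) ?_
    exact tendsto_nhdsWithin_of_tendsto_nhds_of_eventually_within y hy_tendsto
      (Eventually.of_forall fun n => hK (hYmem n).1)
  have h2 : Tendsto (fun n => ‖Φ (y n) (f (y n))‖) atTop atTop := by
    apply tendsto_atTop_mono (fun n => ?_) tendsto_natCast_atTop_atTop
    rw [hfy n]
    exact (hv2 n).le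
  exact not_tendsto_atTop_of_tendsto_nhds h1.norm h2
end
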